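/- arXiv:1912.02435 — 3 statements merged into one kernel-verified Lean document; each statement's English description precedes it below -/
import Mathlib

section
/- Let n ≥ 1 and let φ : ℝⁿ × ℝⁿ → ℝⁿ, (q, q̄) ↦ φ(q, q̄), be a C² map such that for every (q, q̄) the partial derivative A(q, q̄) := D_{q̄}φ(q, q̄) : ℝⁿ → ℝⁿ (derivative in the second variable) is an invertible linear map. Define the lift φ̄ : (ℝⁿ × ℝⁿ) × (ℝⁿ × ℝⁿ) → ℝⁿ × ℝⁿ by φ̄((q, p), (q̄, p̄)) := (φ(q, q̄), ((A(q, q̄))ᵀ)⁻¹ p̄), where ᵀ denotes the adjoint with respect to the standard inner product. Then for every point ((q, p), (q̄, p̄)) the partial derivative of φ̄ in the second variable (q̄, p̄) is invertible, and for each fixed (q, p, q̄) the map R̄ : p̄ ↦ −(D_{(q̄,p̄)}φ̄((q,p),(q̄,p̄)))⁻¹ ∘ D_{(q,p)}φ̄((q,p),(q̄,p̄)), with values in linear maps ℝ²ⁿ → ℝ²ⁿ, is affine in p̄: there exist T₀(q, q̄) ∈ L(ℝ²ⁿ, ℝ²ⁿ) and a linear map T₁(q, q̄) : ℝⁿ →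 L(ℝ²ⁿ, ℝ²ⁿ) such that R̄(p̄) = T₀(q, q̄) + T₁(q, q̄)(p̄) for all p̄. In particular the result is independent of p. -/
open ContinuousLinearMap

section Aux

variable {E : Type*} [NormedAddCommGroup E] [InnerProductSpace ℝ E] [CompleteSpace E]

/-- Adjoint as a continuous linear map over `ℝ`. -/
noncomputable def adjCLM (E : Type*) [NormedAddCommGroup E] [InnerProductSpace ℝ E]
    [CompleteSpace E] : (E →L[ℝ] E) →L[ℝ] (E →L[ℝ] E) where
  toFun f := ContinuousLinearMap.adjoint f
  map_add' f g := by simp [map_add]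
  map_smul' c f := by simp
  cont := (ContinuousLinearMap.adjoint (E := E) (F := E) (𝕜 := ℝ)).toLinearIsometry.continuous

theorem adjCLM_apply (f : E →L[ℝ] E) : adjCLM E f = ContinuousLinearMap.adjoint f := rfl

theorem isUnit_adj {f : E →L[ℝ] E} (h : IsUnit f) :
    IsUnit (ContinuousLinearMap.adjoint f) := by
  rcases h with ⟨u, rfl⟩
  refine ⟨⟨ContinuousLinearMap.adjoint (↑u : E →L[ℝ] E),
    ContinuousLinearMap.adjoint (↑u⁻¹ : E →L[ℝ] E), ?_, ?_⟩, rfl⟩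
  · rw [ContinuousLinearMap.mul_def, ← ContinuousLinearMap.adjoint_comp,
      ← ContinuousLinearMap.mul_def, u.inv_mul, ContinuousLinearMap.one_def,
      ContinuousLinearMap.adjoint_id, ← ContinuousLinearMap.one_def]
  · rw [ContinuousLinearMap.mul_def, ← ContinuousLinearMap.adjoint_comp,
      ← ContinuousLinearMap.mul_def, u.mul_inv, ContinuousLinearMap.one_def,
      ContinuousLinearMap.adjoint_id, ← ContinuousLinearMap.one_def]

end Aux

section Block

variable {E : Type*} [NormedAddCommGroup E] [NormedSpace ℝ E] [CompleteSpace E]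

/-- Unit built out of a lower-triangular block operator on `E × E`. -/
noncomputable def blockUnit (u v : (E →L[ℝ] E)ˣ) (C : E →L[ℝ] E) :
    ((E × E) →L[ℝ] (E × E))ˣ where
  val := ((u : E →L[ℝ] E).comp (fst ℝ E E)).prod
    (C.comp (fst ℝ E E) + (v : E →L[ℝ] E).comp (snd ℝ E E))
  inv := ((↑u⁻¹ : E →L[ℝ] E).comp (fst ℝ E E)).prod
    ((↑v⁻¹ : E →L[ℝ] E).comp (snd ℝ E E - C.comp ((↑u⁻¹ : E →L[ℝ] E).comp (fst ℝ E E))))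
  val_inv := by
    have hu : ∀ w : E, (↑u : E →L[ℝ] E) ((↑u⁻¹ : E →L[ℝ] E) w) = w := fun w => by
      rw [← ContinuousLinearMap.mul_apply, u.mul_inv, ContinuousLinearMap.one_apply]
    have hv : ∀ w : E, (↑v : E →L[ℝ] E) ((↑v⁻¹ : E →L[ℝ] E) w) = w := fun w => by
      rw [← ContinuousLinearMap.mul_apply, v.mul_inv, ContinuousLinearMap.one_apply]
    refine ContinuousLinearMap.ext fun w => ?_
    simp [ContinuousLinearMap.mul_apply, Prod.ext_iff, map_sub, hu, hv]
  inv_val := by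
    have hu : ∀ w : E, (↑u⁻¹ : E →L[ℝ] E) ((↑u : E →L[ℝ] E) w) = w := fun w => by
      rw [← ContinuousLinearMap.mul_apply, u.inv_mul, ContinuousLinearMap.one_apply]
    have hv : ∀ w : E, (↑v⁻¹ : E →L[ℝ] E) ((↑v : E →L[ℝ] E) w) = w := fun w => by
      rw [← ContinuousLinearMap.mul_apply, v.inv_mul, ContinuousLinearMap.one_apply]
    refine ContinuousLinearMap.ext fun w => ?_
    simp [ContinuousLinearMap.mul_apply, Prod.ext_iff, map_add, map_sub, hu, hv]

theorem blockInv {A G : E →L[ℝ] E} (C : E →L[ℝ] E) (hA : IsUnit A) (hG : IsUnit G) :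
    IsUnit ((A.comp (fst ℝ E E)).prod (C.comp (fst ℝ E E) + G.comp (snd ℝ E E))) ∧
      Ring.inverse ((A.comp (fst ℝ E E)).prod (C.comp (fst ℝ E E) + G.comp (snd ℝ E E))) =
        ((Ring.inverse A).comp (fst ℝ E E)).prod
          ((Ring.inverse G).comp
            (snd ℝ E E - C.comp ((Ring.inverse A).comp (fst ℝ E E)))) := by
  rcases hA with ⟨u, rfl⟩
  rcases hG with ⟨v, rfl⟩
  have h1 : ((↑u : E →L[ℝ] E).comp (fst ℝ E E)).prod
      (C.comp (fst ℝ E E) + (↑v : E →L[ℝ] E).comp (snd ℝ E E)) = ↑(blockUnit u v C) := rfl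
  rw [h1, Ring.inverse_unit, Ring.inverse_unit, Ring.inverse_unit]
  exact ⟨(blockUnit u v C).isUnit, rfl⟩

end Block

section Key

variable {E : Type*} [NormedAddCommGroup E] [InnerProductSpace ℝ E] [CompleteSpace E]

theorem key_thm (φ : E × E → E) (hφ : ContDiff ℝ 2 φ)
    (hu : ∀ q qb : E, IsUnit ((fderiv ℝ φ (q, qb)).comp (inr ℝ E E)))
    (ψ : (E × E) × (E × E) → E × E)
    (hψ : ∀ q p qb pb : E, ψ ((q, p), (qb, pb)) =
      (φ (q, qb), Ring.inverse (ContinuousLinearMap.adjoint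
        ((fderiv ℝ φ (q, qb)).comp (inr ℝ E E))) pb)) :
    (∀ q p qb pb : E, IsUnit (fderiv ℝ (fun y => ψ ((q, p), y)) (qb, pb))) ∧
    (∀ q qb : E,
      ∃ (T₀ : (E × E) →L[ℝ] (E × E)) (T₁ : E →L[ℝ] ((E × E) →L[ℝ] (E × E))),
        ∀ p pb : E,
          -(Ring.inverse (fderiv ℝ (fun y => ψ ((q, p), y)) (qb, pb))).comp
              (fderiv ℝ (fun x => ψ (x, (qb, pb))) (q, p)) =
            T₀ + T₁ pb) := by
  have hφd : Differentiable ℝ φ := hφ.differentiable (by norm_num)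
  set g : E × E → E →L[ℝ] E := fun z =>
    Ring.inverse (ContinuousLinearMap.adjoint ((fderiv ℝ φ z).comp (inr ℝ E E))) with hgdef
  have hBc : ContDiff ℝ 1 (fun z : E × E =>
      ContinuousLinearMap.adjoint ((fderiv ℝ φ z).comp (inr ℝ E E))) := by
    have h2 : ContDiff ℝ 1 (fderiv ℝ φ) := hφ.fderiv_right (by norm_num)
    exact (((adjCLM E).comp ((compL ℝ E (E × E) E).flip (inr ℝ E E))).contDiff).comp h2
  have hBu : ∀ z : E × E, IsUnit
      (ContinuousLinearMap.adjoint ((fderiv ℝ φ z).comp (inr ℝ E E))) := fun z => by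
    have := hu z.1 z.2
    rw [Prod.mk.eta] at this
    exact isUnit_adj this
  have hgd : Differentiable ℝ g := fun z =>
    ((hBc.differentiable (by norm_num)) z).inverse (hBu z)
  have hgu : ∀ z : E × E, IsUnit (g z) := fun z => by
    rcases hBu z with ⟨w, hw⟩
    rw [hgdef]
    simp only [← hw, Ring.inverse_unit]
    exact w⁻¹.isUnit
  -- derivative of second-slot map
  have key2 : ∀ q p qb pb : E, HasFDerivAt (fun y : E × E => ψ ((q, p), y))
      (((((fderiv ℝ φ (q, qb)).comp (inr ℝ E E))).comp (fst ℝ E E)).prod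
        ((((apply ℝ E pb).comp ((fderiv ℝ g (q, qb)).comp (inr ℝ E E))).comp (fst ℝ E E)) +
          (g (q, qb)).comp (snd ℝ E E))) (qb, pb) := by
    intro q p qb pb
    have hfun : (fun y : E × E => ψ ((q, p), y)) =
        fun y : E × E => (φ (q, y.1), g (q, y.1) y.2) := by
      funext y
      rw [← Prod.mk.eta (p := y), hψ]
    rw [hfun]
    have hin : HasFDerivAt (fun y : E × E => (q, y.1))
        ((inr ℝ E E).comp (fst ℝ E E)) (qb, pb) :=
      (hasFDerivAt_prodMk_right q qb).comp (qb, pb) (hasFDerivAt_fst)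
    have h1 : HasFDerivAt (fun y : E × E => φ (q, y.1))
        (((fderiv ℝ φ (q, qb)).comp (inr ℝ E E)).comp (fst ℝ E E)) (qb, pb) := by
      have := ((hφd (q, qb)).hasFDerivAt).comp (qb, pb) hin
      rwa [← ContinuousLinearMap.comp_assoc] at this
    have hgq : HasFDerivAt (fun t : E => g (q, t))
        ((fderiv ℝ g (q, qb)).comp (inr ℝ E E)) qb :=
      ((hgd (q, qb)).hasFDerivAt).comp qb (hasFDerivAt_prodMk_right q qb)
    have hpair : HasFDerivAt (fun y : E × E => (g (q, y.1), y.2))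
        ((((fderiv ℝ g (q, qb)).comp (inr ℝ E E)).comp (fst ℝ E E)).prod (snd ℝ E E))
        (qb, pb) :=
      by
        have h := hgq.comp (qb, pb) (hasFDerivAt_fst (𝕜 := ℝ) (E := E) (F := E) (p := (qb, pb)))
        exact h.prodMk (hasFDerivAt_snd (𝕜 := ℝ) (E := E) (F := E) (p := (qb, pb)))
    have happ := (isBoundedBilinearMap_apply.hasFDerivAt (g (q, qb), pb)).comp (qb, pb) hpair
    have heq : (isBoundedBilinearMap_apply.deriv ((g (q, qb)), pb)).comp
        ((((fderiv ℝ g (q, qb)).comp (inr ℝ E E)).comp (fst ℝ E E)).prod (snd ℝ E E)) =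
        (((apply ℝ E pb).comp ((fderiv ℝ g (q, qb)).comp (inr ℝ E E))).comp (fst ℝ E E)) +
          (g (q, qb)).comp (snd ℝ E E) := by
      refine ContinuousLinearMap.ext fun w => ?_
      simp [IsBoundedBilinearMap.deriv_apply, add_comm]
    rw [heq] at happ
    exact h1.prodMk happ
  have key1 : ∀ q p qb pb : E, HasFDerivAt (fun x : E × E => ψ (x, (qb, pb)))
      (((fderiv ℝ φ (q, qb)).comp ((inl ℝ E E).comp (fst ℝ E E))).prod
        (((apply ℝ E pb).comp ((fderiv ℝ g (q, qb)).comp (inl ℝ E E))).comp (fst ℝ E E)))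
      (q, p) := by
    intro q p qb pb
    have hfun : (fun x : E × E => ψ (x, (qb, pb))) =
        fun x : E × E => (φ (x.1, qb), g (x.1, qb) pb) := by
      funext x
      rw [← Prod.mk.eta (p := x), hψ]
    rw [hfun]
    have hin : HasFDerivAt (fun x : E × E => (x.1, qb))
        ((inl ℝ E E).comp (fst ℝ E E)) (q, p) :=
      (hasFDerivAt_prodMk_left (𝕜 := ℝ) q qb).comp (q, p)
        (hasFDerivAt_fst (𝕜 := ℝ) (E := E) (F := E) (p := (q, p)))
    have h1 : HasFDerivAt (fun x : E × E => φ (x.1, qb))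
        ((fderiv ℝ φ (q, qb)).comp ((inl ℝ E E).comp (fst ℝ E E))) (q, p) :=
      ((hφd (q, qb)).hasFDerivAt).comp (q, p) hin
    have hgq : HasFDerivAt (fun x : E × E => g (x.1, qb))
        ((fderiv ℝ g (q, qb)).comp ((inl ℝ E E).comp (fst ℝ E E))) (q, p) := by
      have h := ((hgd (q, qb)).hasFDerivAt).comp (q, p) hin
      exact h
    have h2 : HasFDerivAt (fun x : E × E => g (x.1, qb) pb)
        (((apply ℝ E pb).comp ((fderiv ℝ g (q, qb)).comp (inl ℝ E E))).comp (fst ℝ E E))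
        (q, p) := by
      have := ((ContinuousLinearMap.apply ℝ E pb).hasFDerivAt).comp (q, p) hgq
      -- derivative : (apply pb) ∘L (H ∘L (inl ∘L fst))
      have heq : ((ContinuousLinearMap.apply ℝ E pb).comp
          ((fderiv ℝ g (q, qb)).comp ((inl ℝ E E).comp (fst ℝ E E)))) =
          (((apply ℝ E pb).comp ((fderiv ℝ g (q, qb)).comp (inl ℝ E E))).comp (fst ℝ E E)) := by
        refine ContinuousLinearMap.ext fun w => ?_
        simp
      rwa [heq] at this
    exact h1.prodMk h2
  constructor
  · intro q p qb pb
    rw [(key2 q p qb pb).fderiv]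
    exact (blockInv _ (hu q qb) (hgu (q, qb))).1
  · intro q qb
    refine ⟨-((((Ring.inverse ((fderiv ℝ φ (q, qb)).comp (inr ℝ E E))).comp
          ((fderiv ℝ φ (q, qb)).comp (inl ℝ E E))).comp (fst ℝ E E)).prod 0),
      -(((compL ℝ (E × E) E (E × E)).flip (fst ℝ E E)).comp
          ((((compL ℝ E E (E × E))
              ((inr ℝ E E).comp (Ring.inverse (g (q, qb))))).comp
            ((fderiv ℝ g (q, qb)).comp (inl ℝ E E) -
              (fderiv ℝ g (q, qb)).comp
                ((inr ℝ E E).comp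
                  ((Ring.inverse ((fderiv ℝ φ (q, qb)).comp (inr ℝ E E))).comp
                    ((fderiv ℝ φ (q, qb)).comp (inl ℝ E E)))))).flip)),
      fun p pb => ?_⟩
    rw [(key2 q p qb pb).fderiv, (key1 q p qb pb).fderiv,
      (blockInv _ (hu q qb) (hgu (q, qb))).2]
    refine ContinuousLinearMap.ext fun w => ?_
    simp only [ContinuousLinearMap.coe_comp', Function.comp_apply, neg_apply,
      ContinuousLinearMap.add_apply, ContinuousLinearMap.prod_apply,
      ContinuousLinearMap.comp_apply, ContinuousLinearMap.coe_fst',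
      ContinuousLinearMap.coe_snd', ContinuousLinearMap.sub_apply,
      ContinuousLinearMap.flip_apply, ContinuousLinearMap.compL_apply,
      ContinuousLinearMap.apply_apply, ContinuousLinearMap.inl_apply,
      ContinuousLinearMap.inr_apply, ContinuousLinearMap.zero_apply, map_sub,
      Prod.neg_mk, Prod.mk_add_mk, add_zero, zero_add, map_zero, sub_zero, zero_sub,
      neg_neg, neg_sub, Prod.ext_iff]
    constructor <;>
      simp only [Prod.mk_sub_mk, Prod.mk_add_mk, add_zero, sub_zero, sub_self, neg_zero,
        zero_add, zero_sub, neg_neg]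

end Key

/-- Lift of a formal exponential map to the cotangent bundle: if `φ : ℝⁿ × ℝⁿ → ℝⁿ` is `C²`
with invertible partial derivative `A(q,q̄) = D_{q̄}φ(q,q̄)` in the second variable, and
`φ̄((q,p),(q̄,p̄)) = (φ(q,q̄), ((A(q,q̄))ᵀ)⁻¹ p̄)` is its lift, then the partial derivative of
`φ̄` in its second variable is everywhere invertible, and the map
`R̄ : p̄ ↦ −(D_{(q̄,p̄)}φ̄)⁻¹ ∘ D_{(q,p)}φ̄` is affine in `p̄`, with coefficients depending only
on `(q,q̄)` (in particular independent of `p`). -/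
theorem stmt0 (n : ℕ) (hn : 1 ≤ n)
    (φ : EuclideanSpace ℝ (Fin n) × EuclideanSpace ℝ (Fin n) → EuclideanSpace ℝ (Fin n))
    (hφ : ContDiff ℝ 2 φ)
    (A : EuclideanSpace ℝ (Fin n) → EuclideanSpace ℝ (Fin n) →
      (EuclideanSpace ℝ (Fin n) →L[ℝ] EuclideanSpace ℝ (Fin n)))
    (hA : ∀ q qb, A q qb = fderiv ℝ (fun y => φ (q, y)) qb)
    (hAinv : ∀ q qb, IsUnit (A q qb))
    (φbar : (EuclideanSpace ℝ (Fin n) × EuclideanSpace ℝ (Fin n)) ×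
        (EuclideanSpace ℝ (Fin n) × EuclideanSpace ℝ (Fin n)) →
      EuclideanSpace ℝ (Fin n) × EuclideanSpace ℝ (Fin n))
    (hφbar : ∀ q p qb pb, φbar ((q, p), (qb, pb)) =
      (φ (q, qb), Ring.inverse (ContinuousLinearMap.adjoint (A q qb)) pb)) :
    (∀ q p qb pb : EuclideanSpace ℝ (Fin n),
      IsUnit (fderiv ℝ (fun y => φbar ((q, p), y)) (qb, pb))) ∧
    (∀ q qb : EuclideanSpace ℝ (Fin n),
      ∃ (T₀ : (EuclideanSpace ℝ (Fin n) × EuclideanSpace ℝ (Fin n)) →L[ℝ]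
          (EuclideanSpace ℝ (Fin n) × EuclideanSpace ℝ (Fin n)))
        (T₁ : EuclideanSpace ℝ (Fin n) →L[ℝ]
          ((EuclideanSpace ℝ (Fin n) × EuclideanSpace ℝ (Fin n)) →L[ℝ]
            (EuclideanSpace ℝ (Fin n) × EuclideanSpace ℝ (Fin n)))),
        ∀ p pb : EuclideanSpace ℝ (Fin n),
          -(Ring.inverse (fderiv ℝ (fun y => φbar ((q, p), y)) (qb, pb))).comp
              (fderiv ℝ (fun x => φbar (x, (qb, pb))) (q, p)) =
            T₀ + T₁ pb) := by
  have hpart : ∀ q qb : EuclideanSpace ℝ (Fin n), fderiv ℝ (fun y => φ (q, y)) qb =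
      (fderiv ℝ φ (q, qb)).comp
        (inr ℝ (EuclideanSpace ℝ (Fin n)) (EuclideanSpace ℝ (Fin n))) := fun q qb =>
    ((((hφ.differentiable (by norm_num)) (q, qb)).hasFDerivAt).comp qb
      (hasFDerivAt_prodMk_right q qb)).fderiv
  have hA' : ∀ q qb : EuclideanSpace ℝ (Fin n), A q qb = (fderiv ℝ φ (q, qb)).comp
      (inr ℝ (EuclideanSpace ℝ (Fin n)) (EuclideanSpace ℝ (Fin n))) := fun q qb => by
    rw [hA, hpart]
  exact key_thm φ hφ (fun q qb => hA' q qb ▸ hAinv q qb) φbar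
    (fun q p qb pb => by rw [hφbar, hA'])
end

section
/- Let z be a complex number with |z| < 1. Then the function on the open unit disk w ↦ 1/(z − w) − conj(w)/(1 − z·conj(w)) − conj(z) is Lebesgue-integrable on {w ∈ ℂ : |w| < 1}, and its integral over the open unit disk equals 0. -/
open MeasureTheory Real Set Metric
open scoped Real
open ComplexConjugate

/-- Real polar coordinates: integrability transfer. -/
lemma integrable_iff_polarR {E : Type*} [NormedAddCommGroup E] [NormedSpace ℝ E] (h : ℝ × ℝ → E) :
    Integrable h ↔ IntegrableOn (fun p => p.1 • h (polarCoord.symm p)) polarCoord.target := by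
  set B : ℝ × ℝ → ℝ × ℝ →L[ℝ] ℝ × ℝ := fun p =>
    LinearMap.toContinuousLinearMap (Matrix.toLin (Module.Basis.finTwoProd ℝ) (Module.Basis.finTwoProd ℝ)
      !![Real.cos p.2, -p.1 * Real.sin p.2; Real.sin p.2, p.1 * Real.cos p.2]) with hB
  have A : ∀ p ∈ polarCoord.target, HasFDerivWithinAt polarCoord.symm (B p) polarCoord.target p :=
    fun p _ => (hasFDerivAt_polarCoord_symm p).hasFDerivWithinAt
  have B_det : ∀ p, (B p).det = p.1 := by
    intro p
    conv_rhs => rw [← one_mul p.1, ← cos_sq_add_sin_sq p.2]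
    simp only [hB, neg_mul, LinearMap.det_toContinuousLinearMap, LinearMap.det_toLin,
      Matrix.det_fin_two_of, sub_neg_eq_add]
    ring
  have h1 : Integrable h ↔ IntegrableOn h polarCoord.source := by
    unfold IntegrableOn
    rw [Measure.restrict_congr_set polarCoord_source_ae_eq_univ, Measure.restrict_univ]
  rw [h1, ← polarCoord.symm_image_target_eq_source,
    integrableOn_image_iff_integrableOn_abs_det_fderiv_smul volume
      polarCoord.open_target.measurableSet A polarCoord.symm.injOn h]
  refine integrableOn_congr_fun (fun p hp => ?_) polarCoord.open_target.measurableSet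
  rw [B_det, abs_of_pos hp.1]

/-- Complex polar coordinates: integrability transfer. -/
lemma integrable_iff_polarC {E : Type*} [NormedAddCommGroup E] [NormedSpace ℝ E] (g : ℂ → E) :
    Integrable g ↔
      IntegrableOn (fun p => p.1 • g (Complex.polarCoord.symm p)) polarCoord.target := by
  rw [← (Complex.volume_preserving_equiv_real_prod.symm).integrable_comp_emb
    Complex.measurableEquivRealProd.symm.measurableEmbedding,
    integrable_iff_polarR]
  rfl

/-- Complex polar coordinates on a ball centered at the origin: integrability transfer. -/
lemma integrableOn_ball_iff_polar {E : Type*} [NormedAddCommGroup E] [NormedSpace ℝ E]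
    (g : ℂ → E) (R : ℝ) :
    IntegrableOn g (ball (0:ℂ) R) ↔
      IntegrableOn (fun p => p.1 • g (Complex.polarCoord.symm p))
        (Ioo (0:ℝ) R ×ˢ Ioo (-π) π) := by
  rw [← integrable_indicator_iff (measurableSet_ball (x := (0:ℂ)) (ε := R)),
    integrable_iff_polarC]
  have hsub : Ioo (0:ℝ) R ×ˢ Ioo (-π) π ⊆ polarCoord.target := by
    rw [polarCoord_target]
    exact Set.prod_mono Ioo_subset_Ioi_self subset_rfl
  have hkey : ∀ p ∈ polarCoord.target,
      p.1 • (ball (0:ℂ) R).indicator g (Complex.polarCoord.symm p) =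
        (Ioo (0:ℝ) R ×ˢ Ioo (-π) π).indicator
          (fun p => p.1 • g (Complex.polarCoord.symm p)) p := by
    rintro ⟨r, θ⟩ hp
    rw [polarCoord_target] at hp
    have hr : 0 < r := hp.1
    have hmem : Complex.polarCoord.symm (r, θ) ∈ ball (0:ℂ) R ↔ r < R := by
      rw [mem_ball_zero_iff, Complex.norm_polarCoord_symm,
        abs_of_pos hr]
    by_cases hcase : r < R
    · rw [Set.indicator_of_mem (hmem.2 hcase), Set.indicator_of_mem (show (r,θ) ∈ Ioo (0:ℝ) R ×ˢ Ioo (-π) π from ⟨⟨hr, hcase⟩, hp.2⟩)]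
    · rw [Set.indicator_of_notMem (fun hm => hcase (hmem.1 hm)),
        Set.indicator_of_notMem (fun hm => hcase hm.1.2), smul_zero]
  constructor
  · intro hI
    have := (hI.congr_fun hkey polarCoord.open_target.measurableSet)
    rw [IntegrableOn, integrable_indicator_iff
      ((measurableSet_Ioo.prod measurableSet_Ioo)), IntegrableOn,
      Measure.restrict_restrict (measurableSet_Ioo.prod measurableSet_Ioo),
      Set.inter_eq_self_of_subset_left hsub] at this
    exact this
  · intro hI
    refine IntegrableOn.congr_fun ?_ (fun p hp => (hkey p hp).symm)
      polarCoord.open_target.measurableSet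
    rw [IntegrableOn, integrable_indicator_iff (measurableSet_Ioo.prod measurableSet_Ioo),
      IntegrableOn, Measure.restrict_restrict (measurableSet_Ioo.prod measurableSet_Ioo),
      Set.inter_eq_self_of_subset_left hsub]
    exact hI

/-- Complex polar coordinates on a ball centered at the origin: the integral. -/
lemma setIntegral_ball_polar {E : Type*} [NormedAddCommGroup E] [NormedSpace ℝ E]
    (g : ℂ → E) (R : ℝ) :
    ∫ w in ball (0:ℂ) R, g w =
      ∫ p in Ioo (0:ℝ) R ×ˢ Ioo (-π) π, p.1 • g (Complex.polarCoord.symm p) := by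
  rw [← integral_indicator (measurableSet_ball (x := (0:ℂ)) (ε := R)),
    ← Complex.integral_comp_polarCoord_symm]
  have hsub : Ioo (0:ℝ) R ×ˢ Ioo (-π) π ⊆ polarCoord.target := by
    rw [polarCoord_target]
    exact Set.prod_mono Ioo_subset_Ioi_self subset_rfl
  have hkey : ∀ p ∈ polarCoord.target,
      p.1 • (ball (0:ℂ) R).indicator g (Complex.polarCoord.symm p) =
        (Ioo (0:ℝ) R ×ˢ Ioo (-π) π).indicator
          (fun p => p.1 • g (Complex.polarCoord.symm p)) p := by
    rintro ⟨r, θ⟩ hp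
    rw [polarCoord_target] at hp
    have hr : 0 < r := hp.1
    have hmem : Complex.polarCoord.symm (r, θ) ∈ ball (0:ℂ) R ↔ r < R := by
      rw [mem_ball_zero_iff, Complex.norm_polarCoord_symm,
        abs_of_pos hr]
    by_cases hcase : r < R
    · rw [Set.indicator_of_mem (hmem.2 hcase), Set.indicator_of_mem (show (r,θ) ∈ Ioo (0:ℝ) R ×ˢ Ioo (-π) π from ⟨⟨hr, hcase⟩, hp.2⟩)]
    · rw [Set.indicator_of_notMem (fun hm => hcase (hmem.1 hm)),
        Set.indicator_of_notMem (fun hm => hcase hm.1.2), smul_zero]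
  rw [setIntegral_congr_fun polarCoord.open_target.measurableSet hkey,
    setIntegral_indicator (measurableSet_Ioo.prod measurableSet_Ioo),
    Set.inter_eq_self_of_subset_right hsub]

/-- Mean value property over the circle, for functions holomorphic on the closed disk. -/
lemma circle_mean_value {r : ℝ} (hr : 0 < r) {g : ℂ → ℂ}
    (hg : DifferentiableOn ℂ g (closedBall 0 r)) :
    ∫ θ in Ioo (-π) π, g (circleMap 0 r θ) = 2 * (π : ℂ) * g 0 := by
  have hd : ∀ x ∈ ball (0:ℂ) r \ (∅ : Set ℂ), DifferentiableAt ℂ g x := fun x hx =>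
    (hg x (ball_subset_closedBall hx.1)).differentiableAt
      (closedBall_mem_nhds_of_mem hx.1)
  have hint := Complex.circleIntegral_sub_center_inv_smul_of_differentiable_on_off_countable hr
    countable_empty hg.continuousOn hd
  have hne : ∀ θ : ℝ, circleMap 0 r θ ≠ 0 := fun θ => circleMap_ne_center hr.ne'
  have hcirc : (∮ w in C(0, r), (w - 0)⁻¹ • g w) =
      ∫ θ in (0:ℝ)..(2*π), Complex.I * g (circleMap 0 r θ) := by
    rw [circleIntegral]
    refine intervalIntegral.integral_congr (fun θ _ => ?_)
    rw [deriv_circleMap]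
    have h0 := hne θ
    simp only [sub_zero, smul_eq_mul]
    field_simp
  rw [hcirc, intervalIntegral.integral_const_mul] at hint
  have h2 : ∫ θ in (0:ℝ)..(2*π), g (circleMap 0 r θ) = 2 * (π:ℂ) * g 0 := by
    refine mul_left_cancel₀ Complex.I_ne_zero ?_
    rw [hint, smul_eq_mul]
    ring
  have hper : Function.Periodic (fun θ : ℝ => g (circleMap 0 r θ)) (2*π) :=
    (periodic_circleMap 0 r).comp g
  have h3 : ∫ θ in (-π)..π, g (circleMap 0 r θ) = 2 * (π:ℂ) * g 0 := by
    have := hper.intervalIntegral_add_eq (-π) 0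
    simp only [zero_add] at this
    rw [show -π + 2*π = π by ring] at this
    rw [this, h2]
  rw [← integral_Ioc_eq_integral_Ioo, ← intervalIntegral.integral_of_le (by linarith [pi_pos]), h3]

lemma polarCoord_symm_eq_circleMap (r θ : ℝ) :
    Complex.polarCoord.symm (r, θ) = circleMap 0 r θ := by
  simp only [Complex.polarCoord_symm_apply, circleMap, Complex.exp_mul_I, zero_add,
    ← Complex.ofReal_cos, ← Complex.ofReal_sin]

open ComplexConjugate in
lemma inner1a (z : ℂ) {r : ℝ} (hr0 : 0 < r) (hrz : r < ‖z‖) :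
    ∫ θ in Ioo (-π) π, (z - circleMap 0 r θ)⁻¹ = 2 * (π:ℂ) * z⁻¹ := by
  have hdiff : DifferentiableOn ℂ (fun w => (z - w)⁻¹) (closedBall 0 r) := by
    refine DifferentiableOn.inv ?_ ?_
    · exact ((differentiable_const z).sub differentiable_id).differentiableOn
    · intro w hw
      rw [mem_closedBall_zero_iff] at hw
      rw [sub_ne_zero]
      intro h
      rw [h] at hrz
      linarith
  have := circle_mean_value hr0 hdiff
  rw [this, sub_zero]

open ComplexConjugate in
lemma inner1b (z : ℂ) {r : ℝ} (hr0 : 0 < r) (hrz : ‖z‖ < r) :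
    ∫ θ in Ioo (-π) π, (z - circleMap 0 r θ)⁻¹ = 0 := by
  set G : ℂ → ℂ := fun w => w * (conj z * w - (r:ℂ)^2)⁻¹ with hG
  have hden : ∀ w ∈ closedBall (0:ℂ) r, conj z * w - (r:ℂ)^2 ≠ 0 := by
    intro w hw
    rw [mem_closedBall_zero_iff] at hw
    intro h
    have h1 : ‖conj z * w‖ = ‖(r:ℂ)^2‖ := by
      rw [sub_eq_zero] at h; rw [h]
    rw [norm_mul, Complex.norm_conj, norm_pow, Complex.norm_of_nonneg hr0.le] at h1
    nlinarith [norm_nonneg z, norm_nonneg w,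
      mul_le_mul_of_nonneg_left hw (norm_nonneg z),
      mul_lt_mul_of_pos_right hrz hr0]
  have hdiff : DifferentiableOn ℂ G (closedBall 0 r) := by
    refine DifferentiableOn.mul differentiable_id.differentiableOn
      (DifferentiableOn.inv ?_ hden)
    exact ((differentiable_const (conj z)).mul differentiable_id).sub
      (differentiable_const _) |>.differentiableOn
  have hmv := circle_mean_value hr0 hdiff
  have hG0 : G 0 = 0 := by simp [hG]
  have hkey : ∀ θ : ℝ, (z - circleMap 0 r θ)⁻¹ = conj (G (circleMap 0 r θ)) := by
    intro θ
    set w := circleMap 0 r θ with hw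
    have habs : ‖w‖ = r := by
      rw [hw, norm_circleMap_zero, abs_of_pos hr0]
    have hw0 : w ≠ 0 := by
      intro h; rw [h] at habs; simp at habs; exact hr0.ne' habs.symm
    have hww : w * conj w = (r:ℂ)^2 := by
      rw [Complex.mul_conj, Complex.normSq_eq_norm_sq, habs]
      push_cast; ring
    have hconjw : conj w ≠ 0 := by
      simpa using hw0
    rw [hG]
    simp only [map_mul, map_inv₀, map_sub, Complex.conj_conj, map_pow, Complex.conj_ofReal]
    have h1 : z * conj w - (r:ℂ)^2 = conj w * (z - w) := by
      rw [← hww]; ring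
    rw [h1, mul_inv, ← mul_assoc, mul_inv_cancel₀ hconjw, one_mul]
  calc ∫ θ in Ioo (-π) π, (z - circleMap 0 r θ)⁻¹
      = ∫ θ in Ioo (-π) π, conj (G (circleMap 0 r θ)) := by
        exact integral_congr_ae (Filter.Eventually.of_forall fun θ => hkey θ)
    _ = conj (∫ θ in Ioo (-π) π, G (circleMap 0 r θ)) := integral_conj
    _ = 0 := by rw [hmv, hG0]; simp

open ComplexConjugate in
lemma inner2 (z : ℂ) (hz : ‖z‖ < 1) {r : ℝ} (hr0 : 0 < r) (hr1 : r < 1) :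
    ∫ θ in Ioo (-π) π,
      conj (circleMap 0 r θ) / (1 - z * conj (circleMap 0 r θ)) = 0 := by
  set H : ℂ → ℂ := fun w => w * (1 - conj z * w)⁻¹ with hH
  have hden : ∀ w ∈ closedBall (0:ℂ) r, 1 - conj z * w ≠ 0 := by
    intro w hw
    rw [mem_closedBall_zero_iff] at hw
    intro h
    have h2 : conj z * w = 1 := by linear_combination -h
    have h1 : ‖conj z * w‖ = 1 := by rw [h2, norm_one]
    rw [norm_mul, Complex.norm_conj] at h1
    nlinarith [norm_nonneg z, norm_nonneg w,
      mul_le_mul_of_nonneg_left hw (norm_nonneg z)]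
  have hdiff : DifferentiableOn ℂ H (closedBall 0 r) := by
    refine DifferentiableOn.mul differentiable_id.differentiableOn
      (DifferentiableOn.inv ?_ hden)
    exact ((differentiable_const (1:ℂ)).sub
      ((differentiable_const (conj z)).mul differentiable_id)).differentiableOn
  have hmv := circle_mean_value hr0 hdiff
  have hH0 : H 0 = 0 := by simp [hH]
  have hkey : ∀ θ : ℝ, conj (circleMap 0 r θ) / (1 - z * conj (circleMap 0 r θ)) =
      conj (H (circleMap 0 r θ)) := by
    intro θ
    rw [hH]
    simp only [map_mul, map_inv₀, map_sub, map_one, Complex.conj_conj]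
    rw [div_eq_mul_inv]
  calc ∫ θ in Ioo (-π) π, conj (circleMap 0 r θ) / (1 - z * conj (circleMap 0 r θ))
      = ∫ θ in Ioo (-π) π, conj (H (circleMap 0 r θ)) :=
        integral_congr_ae (Filter.Eventually.of_forall fun θ => hkey θ)
    _ = conj (∫ θ in Ioo (-π) π, H (circleMap 0 r θ)) := integral_conj
    _ = 0 := by rw [hmv, hH0]; simp

lemma riesz0 : IntegrableOn (fun w : ℂ => (‖w‖)⁻¹) (ball (0:ℂ) 2) := by
  rw [integrableOn_ball_iff_polar]
  have hfin : volume (Ioo (0:ℝ) 2 ×ˢ Ioo (-π) π) < ⊤ := by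
    rw [Measure.volume_eq_prod, Measure.prod_prod, Real.volume_Ioo, Real.volume_Ioo]
    exact ENNReal.mul_lt_top ENNReal.ofReal_lt_top ENNReal.ofReal_lt_top
  have hconst : IntegrableOn (fun _ : ℝ × ℝ => (1:ℝ)) (Ioo (0:ℝ) 2 ×ˢ Ioo (-π) π) :=
    integrableOn_const hfin.ne
  refine hconst.congr_fun (fun p hp => ?_) (measurableSet_Ioo.prod measurableSet_Ioo)
  have hp1 : 0 < p.1 := hp.1.1
  rw [smul_eq_mul, Complex.norm_polarCoord_symm, abs_of_pos hp1,
    mul_inv_cancel₀ hp1.ne']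

lemma rieszz (z : ℂ) (hz : ‖z‖ < 1) :
    IntegrableOn (fun w : ℂ => (‖z - w‖)⁻¹) (ball (0:ℂ) 1) := by
  have h2 : IntegrableOn (fun w : ℂ => (‖z - w‖)⁻¹) (ball z 2) := by
    have hmp : MeasurePreserving (fun w : ℂ => z - w) volume volume :=
      Measure.measurePreserving_sub_left volume z
    have hemb : MeasurableEmbedding (fun w : ℂ => z - w) :=
      (Homeomorph.subLeft z).measurableEmbedding
    have h0 : Integrable ((ball (0:ℂ) 2).indicator (fun w => (‖w‖)⁻¹)) :=
      (integrable_indicator_iff measurableSet_ball).2 riesz0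
    have h1 := (hmp.integrable_comp_emb hemb).2 h0
    have heq : ((ball (0:ℂ) 2).indicator (fun w => (‖w‖)⁻¹)) ∘ (fun w => z - w)
        = (ball z 2).indicator (fun w => (‖z - w‖)⁻¹) := by
      funext w
      have hmem : z - w ∈ ball (0:ℂ) 2 ↔ w ∈ ball z 2 := by
        rw [mem_ball_zero_iff, mem_ball, Complex.dist_eq, norm_sub_rev w z]
      by_cases hw : w ∈ ball z 2
      · rw [Function.comp_apply, Set.indicator_of_mem (hmem.2 hw), Set.indicator_of_mem hw]
      · rw [Function.comp_apply, Set.indicator_of_notMem (fun hm => hw (hmem.1 hm)),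
          Set.indicator_of_notMem hw]
    rw [heq] at h1
    exact (integrable_indicator_iff measurableSet_ball).1 h1
  refine h2.mono_set (fun w hw => ?_)
  rw [mem_ball] at hw ⊢
  calc dist w z ≤ dist w 0 + dist (0:ℂ) z := dist_triangle _ _ _
    _ < 1 + 1 := by
        refine add_lt_add hw ?_
        rw [dist_comm, Complex.dist_eq, sub_zero]
        exact hz
    _ = 2 := by norm_num

open ComplexConjugate in
lemma main_integrable (z : ℂ) (hz : ‖z‖ < 1) :
    IntegrableOn (fun w : ℂ =>
      1 / (z - w) - conj w / (1 - z * conj w) - conj z) (ball (0:ℂ) 1) := by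
  set C : ℝ := (1 - ‖z‖)⁻¹ + ‖z‖ with hC
  have hzpos : 0 < 1 - ‖z‖ := by linarith
  have hg : IntegrableOn (fun w : ℂ => (‖z - w‖)⁻¹ + C) (ball 0 1) :=
    (rieszz z hz).add (integrableOn_const measure_ball_lt_top.ne)
  refine Integrable.mono' hg ?_ ?_
  · refine Measurable.aestronglyMeasurable ?_
    have mc : Measurable (fun w : ℂ => conj w) := Complex.continuous_conj.measurable
    have m1 : Measurable (fun w : ℂ => (z - w)⁻¹) := (measurable_const.sub measurable_id).inv
    have m2 : Measurable (fun w : ℂ => conj w * (1 - z * conj w)⁻¹) :=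
      mc.mul ((measurable_const.sub (mc.const_mul z)).inv)
    simp only [one_div, div_eq_mul_inv]
    exact ((m1.const_mul 1).sub m2).sub measurable_const
  · rw [ae_restrict_iff' measurableSet_ball]
    refine Filter.Eventually.of_forall (fun w hw => ?_)
    rw [mem_ball_zero_iff] at hw
    have hden : 1 - ‖z‖ ≤ ‖1 - z * conj w‖ := by
      calc 1 - ‖z‖ ≤ 1 - ‖z * conj w‖ := by
            rw [norm_mul, Complex.norm_conj]
            nlinarith [norm_nonneg z, norm_nonneg w]
        _ ≤ ‖1 - z * conj w‖ := by
            have := norm_sub_norm_le (1 : ℂ) (z * conj w)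
            simpa using this
    calc ‖1 / (z - w) - conj w / (1 - z * conj w) - conj z‖
        ≤ ‖1 / (z - w) - conj w / (1 - z * conj w)‖ + ‖conj z‖ := norm_sub_le _ _
      _ ≤ ‖1 / (z - w)‖ + ‖conj w / (1 - z * conj w)‖ + ‖conj z‖ := by
          gcongr; exact norm_sub_le _ _
      _ ≤ (‖z - w‖)⁻¹ + (1 - ‖z‖)⁻¹ + ‖z‖ := by
          gcongr
          · rw [one_div, norm_inv]
          · rw [norm_div, Complex.norm_conj]
            calc ‖w‖ / ‖1 - z * conj w‖
                ≤ 1 / (1 - ‖z‖) :=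
                  div_le_div₀ (by norm_num) hw.le hzpos hden
              _ = (1 - ‖z‖)⁻¹ := one_div _
          · rw [Complex.norm_conj]
      _ = (‖z - w‖)⁻¹ + C := by rw [hC]; ring

/-- For `|z| < 1`, the function `w ↦ 1/(z - w) - conj w/(1 - z·conj w) - conj z` is
Lebesgue-integrable on the open unit disk and its integral over the open unit disk is `0`.
(This is the `dz`-component of Kontsevich's lemma `∫_𝔻 𝒫(z,w) ∧ φ(w,u) = 0`.) -/
theorem stmt4 (z : ℂ) (hz : ‖z‖ < 1) :
    IntegrableOn
        (fun w : ℂ =>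
          1 / (z - w) - (starRingEnd ℂ) w / (1 - z * (starRingEnd ℂ) w) - (starRingEnd ℂ) z)
        {w : ℂ | ‖w‖ < 1} volume ∧
    ∫ w in {w : ℂ | ‖w‖ < 1},
        (1 / (z - w) - (starRingEnd ℂ) w / (1 - z * (starRingEnd ℂ) w) - (starRingEnd ℂ) z) =
      0 := by
  have hSet : {w : ℂ | ‖w‖ < 1} = ball (0:ℂ) 1 := by
    ext w
    simp [mem_ball_zero_iff]
  set f : ℂ → ℂ := fun w =>
    1 / (z - w) - conj w / (1 - z * conj w) - conj z with hf
  have hInt : IntegrableOn f (ball (0:ℂ) 1) := main_integrable z hz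
  refine ⟨hSet ▸ hInt, ?_⟩
  rw [hSet, setIntegral_ball_polar f 1]
  have hprod : IntegrableOn (fun p : ℝ × ℝ => p.1 • f (Complex.polarCoord.symm p))
      (Ioo (0:ℝ) 1 ×ˢ Ioo (-π) π) := (integrableOn_ball_iff_polar f 1).1 hInt
  rw [Measure.volume_eq_prod] at hprod
  rw [show (volume : Measure (ℝ × ℝ)) = (volume : Measure ℝ).prod volume from
    Measure.volume_eq_prod ℝ ℝ, setIntegral_prod _ hprod]
  show (∫ x in Ioo (0:ℝ) 1, ∫ y in Ioo (-π) π, x • f (Complex.polarCoord.symm (x, y))) = 0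
  set c1 : ℂ := 2 * (π:ℂ) * z⁻¹ with hc1
  set c2 : ℂ := 2 * (π:ℂ) * conj z with hc2
  have hae : ∀ᵐ r : ℝ, r ∈ Ioo (0:ℝ) 1 →
      (∫ θ in Ioo (-π) π, r • f (Complex.polarCoord.symm (r, θ))) =
      (Ioo (0:ℝ) (‖z‖)).indicator (fun s : ℝ => (s:ℂ) * c1) r - (r:ℂ) * c2 := by
    have hsing : (volume : Measure ℝ) {‖z‖} = 0 := measure_singleton _
    filter_upwards [compl_mem_ae_iff.2 hsing] with r hrne hr
    have hrne' : r ≠ ‖z‖ := hrne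
    have hr0 : 0 < r := hr.1
    have hr1 : r < 1 := hr.2
    -- rewrite polar symm to circleMap
    have hcm : ∀ θ : ℝ, f (Complex.polarCoord.symm (r, θ)) = f (circleMap 0 r θ) := by
      intro θ; rw [polarCoord_symm_eq_circleMap]
    rw [integral_congr_ae (Filter.Eventually.of_forall fun θ =>
      congrArg (r • ·) (hcm θ)), integral_smul]
    -- integrability of the three θ-pieces
    have hne1 : ∀ θ : ℝ, z - circleMap 0 r θ ≠ 0 := by
      intro θ h
      apply hrne'
      have : z = circleMap 0 r θ := by linear_combination h
      rw [this, norm_circleMap_zero, abs_of_pos hr0]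
    have hne2 : ∀ θ : ℝ, 1 - z * conj (circleMap 0 r θ) ≠ 0 := by
      intro θ h
      have h2 : z * conj (circleMap 0 r θ) = 1 := by linear_combination -h
      have h1 : ‖z * conj (circleMap 0 r θ)‖ = 1 := by rw [h2, norm_one]
      rw [norm_mul, Complex.norm_conj, norm_circleMap_zero, abs_of_pos hr0] at h1
      nlinarith [norm_nonneg z]
    have hcont1 : Continuous (fun θ : ℝ => 1 / (z - circleMap 0 r θ)) := by
      simp only [one_div]
      exact ((continuous_const.sub (continuous_circleMap 0 r)).inv₀ hne1)
    have hcont2 : Continuous (fun θ : ℝ =>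
        conj (circleMap 0 r θ) / (1 - z * conj (circleMap 0 r θ))) := by
      have hconj : Continuous (fun θ : ℝ => conj (circleMap 0 r θ)) :=
        Complex.continuous_conj.comp (continuous_circleMap 0 r)
      exact hconj.div (continuous_const.sub (continuous_const.mul hconj)) hne2
    have i1 : IntegrableOn (fun θ : ℝ => 1 / (z - circleMap 0 r θ)) (Ioo (-π) π) :=
      (hcont1.integrableOn_Icc (a := -π) (b := π)).mono_set Ioo_subset_Icc_self
    have i2 : IntegrableOn (fun θ : ℝ =>
        conj (circleMap 0 r θ) / (1 - z * conj (circleMap 0 r θ))) (Ioo (-π) π) :=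
      (hcont2.integrableOn_Icc (a := -π) (b := π)).mono_set Ioo_subset_Icc_self
    have i3 : IntegrableOn (fun _ : ℝ => conj z) (Ioo (-π) π) :=
      integrableOn_const (by rw [Real.volume_Ioo]; exact ENNReal.ofReal_ne_top)
    have i12 : IntegrableOn (fun θ : ℝ => 1 / (z - circleMap 0 r θ)
        - conj (circleMap 0 r θ) / (1 - z * conj (circleMap 0 r θ))) (Ioo (-π) π) := i1.sub i2
    have hsplit : (∫ θ in Ioo (-π) π, f (circleMap 0 r θ)) =
        (∫ θ in Ioo (-π) π, 1 / (z - circleMap 0 r θ))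
        - (∫ θ in Ioo (-π) π, conj (circleMap 0 r θ) / (1 - z * conj (circleMap 0 r θ)))
        - (∫ θ in Ioo (-π) π, (conj z : ℂ)) := by
      rw [← integral_sub i1 i2, ← integral_sub i12 i3]
    have hT3 : (∫ _ in Ioo (-π) π, (conj z : ℂ)) = 2 * (π:ℂ) * conj z := by
      rw [setIntegral_const, measureReal_def, Real.volume_Ioo]
      rw [ENNReal.toReal_ofReal (by linarith [pi_pos])]
      rw [Complex.real_smul]
      push_cast
      ring
    have hT2 := inner2 z hz hr0 hr1
    rw [hsplit, hT2, hT3]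
    by_cases hcase : r < ‖z‖
    · have hT1 : (∫ θ in Ioo (-π) π, 1 / (z - circleMap 0 r θ)) = c1 := by
        simp only [one_div]
        rw [inner1a z hr0 hcase, hc1]
      rw [hT1, Set.indicator_of_mem
        (show r ∈ Ioo (0:ℝ) (‖z‖) from ⟨hr0, hcase⟩)]
      simp only [hc1, hc2, smul_sub, Complex.real_smul]
      push_cast
      ring
    · have hzr : ‖z‖ < r := lt_of_le_of_ne (not_lt.1 hcase) (Ne.symm hrne')
      have hT1 : (∫ θ in Ioo (-π) π, 1 / (z - circleMap 0 r θ)) = 0 := by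
        simp only [one_div]
        rw [inner1b z hr0 hzr]
      rw [hT1, Set.indicator_of_notMem
        (fun hm => hcase (Set.mem_Ioo.1 hm).2)]
      simp only [hc1, hc2, smul_sub, Complex.real_smul]
      push_cast
      ring
  rw [setIntegral_congr_ae measurableSet_Ioo hae]
  -- split the outer integral
  have jcont : Continuous (fun s : ℝ => (s:ℂ) * c1) :=
    (Complex.continuous_ofReal.mul continuous_const)
  have j1 : IntegrableOn (fun r : ℝ =>
      (Ioo (0:ℝ) (‖z‖)).indicator (fun s : ℝ => (s:ℂ) * c1) r) (Ioo (0:ℝ) 1) := by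
    rw [IntegrableOn, integrable_indicator_iff measurableSet_Ioo, IntegrableOn,
      Measure.restrict_restrict measurableSet_Ioo]
    exact ((jcont.integrableOn_Icc (a := (0:ℝ)) (b := ‖z‖)).mono_set
      (fun x hx => Ioo_subset_Icc_self hx.1))
  have j2 : IntegrableOn (fun r : ℝ => (r:ℂ) * c2) (Ioo (0:ℝ) 1) :=
    ((Complex.continuous_ofReal.mul continuous_const).integrableOn_Icc
      (a := (0:ℝ)) (b := 1)).mono_set Ioo_subset_Icc_self
  rw [integral_sub j1 j2]
  have key : ∀ (a : ℝ), 0 ≤ a → ∀ c : ℂ, (∫ r in Ioo (0:ℝ) a, (r:ℂ) * c)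
      = ((a^2/2 : ℝ) : ℂ) * c := by
    intro a ha c
    rw [integral_mul_const]
    have : (∫ r in Ioo (0:ℝ) a, (r:ℂ)) = ((a^2/2 : ℝ) : ℂ) := by
      rw [← integral_Ioc_eq_integral_Ioo, ← intervalIntegral.integral_of_le ha]
      rw [intervalIntegral.integral_ofReal, integral_id]
      norm_num
    rw [this]
  have hout1 : (∫ r in Ioo (0:ℝ) 1,
      (Ioo (0:ℝ) (‖z‖)).indicator (fun s : ℝ => (s:ℂ) * c1) r)
      = (((‖z‖)^2/2 : ℝ) : ℂ) * c1 := by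
    rw [setIntegral_indicator measurableSet_Ioo,
      Set.inter_eq_self_of_subset_right (Ioo_subset_Ioo le_rfl hz.le),
      key _ (norm_nonneg z) c1]
  have hout2 : (∫ r in Ioo (0:ℝ) 1, (r:ℂ) * c2) = (((1:ℝ)^2/2 : ℝ) : ℂ) * c2 :=
    key 1 zero_le_one c2
  rw [hout1, hout2, hc1, hc2]
  by_cases hz0 : z = 0
  · simp [hz0]
  · have habs : ((‖z‖ : ℝ) : ℂ)^2 = z * conj z := by
      rw [Complex.mul_conj, Complex.normSq_eq_norm_sq]
      push_cast
      ring
    have hzne : (z:ℂ) ≠ 0 := hz0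
    field_simp
    push_cast
    rw [habs]
    ring
end

section
/- Let n ∈ ℕ and let ω be an antisymmetric n × n matrix with complex entries. On A := MvPolynomial (Fin n) ℂ define for each k ≥ 0 the bidifferential operator B_k(a, b) := Σ_{i, j : Fin k → Fin n} (Π_t ω_{i(t), j(t)}) · (Π_t ∂_{i(t)} a) · (Π_t ∂_{j(t)} b), where ∂_m is the partial derivative in the m-th variable, and define the Moyal product on formal power series in a parameter ℏ with coefficients in A by (f ⋆ g)_m := Σ_{k + p + q = m} (1/k!) (−i/2)^k B_k(f_p, g_q), where f_p denotes the ℏ^p-coefficient. Then ⋆ is associative: (f ⋆ g) ⋆ h = f ⋆ (g ⋆ h) for all f, g, h ∈ A⟦ℏ⟧. -/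
/-- Iterated partial derivative `∂_{i(0)} ∂_{i(1)} ⋯ ∂_{i(k-1)} a` of a polynomial. -/
noncomputable def iterPDeriv {n k : ℕ} (i : Fin k → Fin n)
    (a : MvPolynomial (Fin n) ℂ) : MvPolynomial (Fin n) ℂ :=
  (List.ofFn i).foldr (fun m p => MvPolynomial.pderiv m p) a

/-- The bidifferential operator
`B_k(a,b) = Σ_{i,j : Fin k → Fin n} (Π_t ω_{i(t) j(t)}) (Π_t ∂_{i(t)} a)(Π_t ∂_{j(t)} b)`. -/
noncomputable def moyalB {n : ℕ} (ω : Matrix (Fin n) (Fin n) ℂ) (k : ℕ)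
    (a b : MvPolynomial (Fin n) ℂ) : MvPolynomial (Fin n) ℂ :=
  ∑ i : Fin k → Fin n, ∑ j : Fin k → Fin n,
    (∏ t, ω (i t) (j t)) • (iterPDeriv i a * iterPDeriv j b)

/-- The Moyal product on formal power series in `ℏ` with polynomial coefficients,
given degreewise by `(f ⋆ g)_m = Σ_{k+p+q=m} (1/k!) (−i/2)^k B_k(f_p, g_q)`. -/
noncomputable def moyalMul {n : ℕ} (ω : Matrix (Fin n) (Fin n) ℂ)
    (f g : ℕ → MvPolynomial (Fin n) ℂ) : ℕ → MvPolynomial (Fin n) ℂ :=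
  fun m => ∑ kr ∈ Finset.HasAntidiagonal.antidiagonal m, ∑ pq ∈ Finset.HasAntidiagonal.antidiagonal kr.2,
    ((1 / (kr.1.factorial : ℂ)) * (-Complex.I / 2) ^ kr.1) • moyalB ω kr.1 (f pq.1) (g pq.2)

set_option linter.unusedSectionVars false

open MvPolynomial Finset


section Generic

lemma my_pderiv_comm {σ : Type*} (u v : σ) (p : MvPolynomial σ ℂ) :
    pderiv u (pderiv v p) = pderiv v (pderiv u p) := by
  induction p using MvPolynomial.induction_on' with
  | add p q hp hq => simp [map_add, hp, hq]
  | monomial s a =>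
    rcases eq_or_ne u v with rfl | huv
    · rfl
    · simp only [pderiv_monomial]
      rw [Finsupp.tsub_apply, Finsupp.tsub_apply, Finsupp.single_eq_of_ne huv,
        Finsupp.single_eq_of_ne (Ne.symm huv)]
      simp only [Nat.sub_zero]
      rw [tsub_right_comm]
      ring_nf

variable {σ τ : Type*} [Fintype σ] [DecidableEq σ] [DecidableEq τ]

lemma pderiv_rename_sum (t : σ → τ) (m : τ) (p : MvPolynomial σ ℂ) :
    pderiv m (rename t p) =
      rename t (∑ v : σ, if t v = m then pderiv v p else 0) := by
  induction p using MvPolynomial.induction_on with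
  | C a => simp
  | add p q hp hq =>
    rw [map_add, map_add, hp, hq, ← map_add, ← Finset.sum_add_distrib]
    congr 1
    refine Finset.sum_congr rfl fun v _ => ?_
    split <;> simp
  | mul_X p s ih =>
    rw [map_mul, rename_X, pderiv_mul, ih, pderiv_X]
    have key : (∑ v : σ, if t v = m then pderiv v (p * X s) else 0)
        = (∑ v : σ, if t v = m then pderiv v p else 0) * X s
          + (if t s = m then p else 0) := by
      have : ∀ v : σ, (if t v = m then pderiv v (p * X s) else 0)
          = (if t v = m then pderiv v p else 0) * X s
            + (if v = s then (if t v = m then p else 0) else 0) := by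
        intro v
        rw [pderiv_mul, pderiv_X]
        rcases eq_or_ne v s with rfl | hvs
        · simp only [Pi.single_eq_same, mul_one, if_pos rfl]
          split <;> simp
        · simp [Pi.single_apply, Ne.symm hvs, hvs]
      rw [Finset.sum_congr rfl fun v _ => this v, Finset.sum_add_distrib,
        ← Finset.sum_mul, Finset.sum_ite_eq' Finset.univ s
          (fun v => if t v = m then p else 0)]
      simp
    rw [key, map_add, map_mul, rename_X]
    congr 1
    simp only [Pi.single_apply]
    split <;> simp

lemma pderiv_rename_ne (t : σ → τ) {m : τ} (hm : ∀ v, t v ≠ m)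
    (p : MvPolynomial σ ℂ) : pderiv m (rename t p) = 0 := by
  rw [pderiv_rename_sum]
  simp [hm]

end Generic

noncomputable section MoyalSetup

variable {n : ℕ}

/-- slot-1 embedding into the 2-slot ring -/
def em1 : MvPolynomial (Fin n) ℂ →ₐ[ℂ] MvPolynomial (Fin n ⊕ Fin n) ℂ := rename Sum.inl
def em2 : MvPolynomial (Fin n) ℂ →ₐ[ℂ] MvPolynomial (Fin n ⊕ Fin n) ℂ := rename Sum.inr
def mu2 : MvPolynomial (Fin n ⊕ Fin n) ℂ →ₐ[ℂ] MvPolynomial (Fin n) ℂ :=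
  rename (Sum.elim id id)
def g1 : MvPolynomial (Fin n) ℂ →ₐ[ℂ] MvPolynomial (Fin n ⊕ (Fin n ⊕ Fin n)) ℂ :=
  rename Sum.inl
def g2 : MvPolynomial (Fin n) ℂ →ₐ[ℂ] MvPolynomial (Fin n ⊕ (Fin n ⊕ Fin n)) ℂ :=
  rename (Sum.inr ∘ Sum.inl)
def g3 : MvPolynomial (Fin n) ℂ →ₐ[ℂ] MvPolynomial (Fin n ⊕ (Fin n ⊕ Fin n)) ℂ :=
  rename (Sum.inr ∘ Sum.inr)
def mu3 : MvPolynomial (Fin n ⊕ (Fin n ⊕ Fin n)) ℂ →ₐ[ℂ] MvPolynomial (Fin n) ℂ :=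
  rename (Sum.elim id (Sum.elim id id))
def phi : MvPolynomial (Fin n ⊕ (Fin n ⊕ Fin n)) ℂ →ₐ[ℂ] MvPolynomial (Fin n ⊕ Fin n) ℂ :=
  rename (Sum.elim Sum.inl (Sum.elim Sum.inl Sum.inr))
def psi : MvPolynomial (Fin n ⊕ (Fin n ⊕ Fin n)) ℂ →ₐ[ℂ] MvPolynomial (Fin n ⊕ Fin n) ℂ :=
  rename (Sum.elim Sum.inl (Sum.elim Sum.inr Sum.inr))
def j12 : MvPolynomial (Fin n ⊕ Fin n) ℂ →ₐ[ℂ] MvPolynomial (Fin n ⊕ (Fin n ⊕ Fin n)) ℂ :=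
  rename (Sum.map id Sum.inl)
def j23 : MvPolynomial (Fin n ⊕ Fin n) ℂ →ₐ[ℂ] MvPolynomial (Fin n ⊕ (Fin n ⊕ Fin n)) ℂ :=
  rename Sum.inr

/-- partial derivative as a `Module.End` -/
def Dop {σ : Type*} (v : σ) : Module.End ℂ (MvPolynomial σ ℂ) :=
  (pderiv v).toLinearMap

@[simp] lemma Dop_apply {σ : Type*} (v : σ) (p : MvPolynomial σ ℂ) :
    Dop v p = pderiv v p := rfl

variable (ω : Matrix (Fin n) (Fin n) ℂ)

def P2 : Module.End ℂ (MvPolynomial (Fin n ⊕ Fin n) ℂ) :=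
  ∑ i : Fin n, ∑ j : Fin n, ω i j • (Dop (Sum.inl i) * Dop (Sum.inr j))
def P12 : Module.End ℂ (MvPolynomial (Fin n ⊕ (Fin n ⊕ Fin n)) ℂ) :=
  ∑ i : Fin n, ∑ j : Fin n, ω i j • (Dop (Sum.inl i) * Dop (Sum.inr (Sum.inl j)))
def P13 : Module.End ℂ (MvPolynomial (Fin n ⊕ (Fin n ⊕ Fin n)) ℂ) :=
  ∑ i : Fin n, ∑ j : Fin n, ω i j • (Dop (Sum.inl i) * Dop (Sum.inr (Sum.inr j)))
def P23 : Module.End ℂ (MvPolynomial (Fin n ⊕ (Fin n ⊕ Fin n)) ℂ) :=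
  ∑ i : Fin n, ∑ j : Fin n, ω i j • (Dop (Sum.inr (Sum.inl i)) * Dop (Sum.inr (Sum.inr j)))

-- basic composition identities
lemma mu2_em1 (a : MvPolynomial (Fin n) ℂ) : mu2 (em1 a) = a := by
  simp [mu2, em1, rename_rename]
lemma mu2_em2 (a : MvPolynomial (Fin n) ℂ) : mu2 (em2 a) = a := by
  simp [mu2, em2, rename_rename]
lemma mu2_phi (z : MvPolynomial (Fin n ⊕ (Fin n ⊕ Fin n)) ℂ) : mu2 (phi z) = mu3 z := by
  have e : (Sum.elim id id ∘ Sum.elim Sum.inl (Sum.elim Sum.inl Sum.inr) :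
      Fin n ⊕ (Fin n ⊕ Fin n) → Fin n) = Sum.elim id (Sum.elim id id) := by
    funext v; rcases v with v | v | v <;> rfl
  simp only [mu2, phi, mu3, rename_rename, e]
lemma mu2_psi (z : MvPolynomial (Fin n ⊕ (Fin n ⊕ Fin n)) ℂ) : mu2 (psi z) = mu3 z := by
  have e : (Sum.elim id id ∘ Sum.elim Sum.inl (Sum.elim Sum.inr Sum.inr) :
      Fin n ⊕ (Fin n ⊕ Fin n) → Fin n) = Sum.elim id (Sum.elim id id) := by
    funext v; rcases v with v | v | v <;> rfl
  simp only [mu2, psi, mu3, rename_rename, e]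
lemma phi_j12 (y : MvPolynomial (Fin n ⊕ Fin n) ℂ) : phi (j12 y) = em1 (mu2 y) := by
  have e : (Sum.elim Sum.inl (Sum.elim Sum.inl Sum.inr) ∘ Sum.map id Sum.inl :
      Fin n ⊕ Fin n → Fin n ⊕ Fin n) = Sum.inl ∘ Sum.elim id id := by
    funext v; rcases v with v | v <;> rfl
  simp only [phi, j12, em1, mu2, rename_rename, e]
lemma phi_g3 (c : MvPolynomial (Fin n) ℂ) : phi (g3 c) = em2 c := by
  have e : (Sum.elim Sum.inl (Sum.elim Sum.inl Sum.inr) ∘ (Sum.inr ∘ Sum.inr) :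
      Fin n → Fin n ⊕ Fin n) = Sum.inr := by funext v; rfl
  simp only [phi, g3, em2, rename_rename, e]
lemma psi_j23 (y : MvPolynomial (Fin n ⊕ Fin n) ℂ) : psi (j23 y) = em2 (mu2 y) := by
  have e : (Sum.elim Sum.inl (Sum.elim Sum.inr Sum.inr) ∘ Sum.inr :
      Fin n ⊕ Fin n → Fin n ⊕ Fin n) = Sum.inr ∘ Sum.elim id id := by
    funext v; rcases v with v | v <;> rfl
  simp only [psi, j23, em2, mu2, rename_rename, e]
lemma psi_g1 (a : MvPolynomial (Fin n) ℂ) : psi (g1 a) = em1 a := by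
  have e : (Sum.elim Sum.inl (Sum.elim Sum.inr Sum.inr) ∘ Sum.inl :
      Fin n → Fin n ⊕ Fin n) = Sum.inl := by funext v; rfl
  simp only [psi, g1, em1, rename_rename, e]
lemma j12_em1 (a : MvPolynomial (Fin n) ℂ) : j12 (em1 a) = g1 a := by
  have e : (Sum.map id Sum.inl ∘ Sum.inl : Fin n → Fin n ⊕ (Fin n ⊕ Fin n)) = Sum.inl := by
    funext v; rfl
  simp only [j12, em1, g1, rename_rename, e]
lemma j12_em2 (a : MvPolynomial (Fin n) ℂ) : j12 (em2 a) = g2 a := by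
  have e : (Sum.map id Sum.inl ∘ Sum.inr : Fin n → Fin n ⊕ (Fin n ⊕ Fin n))
      = Sum.inr ∘ Sum.inl := by funext v; rfl
  simp only [j12, em2, g2, rename_rename, e]
lemma j23_em1 (a : MvPolynomial (Fin n) ℂ) : j23 (em1 a) = g2 a := by
  have e : ((Sum.inr : Fin n ⊕ Fin n → Fin n ⊕ (Fin n ⊕ Fin n)) ∘ Sum.inl)
      = Sum.inr ∘ Sum.inl := by funext v; rfl
  simp only [j23, em1, g2, rename_rename, e]
lemma j23_em2 (a : MvPolynomial (Fin n) ℂ) : j23 (em2 a) = g3 a := by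
  have e : ((Sum.inr : Fin n ⊕ Fin n → Fin n ⊕ (Fin n ⊕ Fin n)) ∘ Sum.inr)
      = Sum.inr ∘ Sum.inr := by funext v; rfl
  simp only [j23, em2, g3, rename_rename, e]

-- derivatives through the embeddings
lemma pderiv_em1 (i : Fin n) (a : MvPolynomial (Fin n) ℂ) :
    pderiv (Sum.inl i : Fin n ⊕ Fin n) (em1 a) = em1 (pderiv i a) :=
  pderiv_rename Sum.inl_injective i a
lemma pderiv_em2 (j : Fin n) (a : MvPolynomial (Fin n) ℂ) :
    pderiv (Sum.inr j : Fin n ⊕ Fin n) (em2 a) = em2 (pderiv j a) :=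
  pderiv_rename Sum.inr_injective j a
lemma pderiv_em1_inr (j : Fin n) (a : MvPolynomial (Fin n) ℂ) :
    pderiv (Sum.inr j : Fin n ⊕ Fin n) (em1 a) = 0 :=
  pderiv_rename_ne _ (by simp) a
lemma pderiv_em2_inl (i : Fin n) (a : MvPolynomial (Fin n) ℂ) :
    pderiv (Sum.inl i : Fin n ⊕ Fin n) (em2 a) = 0 :=
  pderiv_rename_ne _ (by simp) a

end MoyalSetup

noncomputable section MoyalOps

variable {n : ℕ} (ω : Matrix (Fin n) (Fin n) ℂ)

-- co-Leibniz rules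
lemma pderiv_mu2 (m : Fin n) (x : MvPolynomial (Fin n ⊕ Fin n) ℂ) :
    pderiv m (mu2 x) = mu2 (pderiv (Sum.inl m) x) + mu2 (pderiv (Sum.inr m) x) := by
  rw [mu2, pderiv_rename_sum, ← map_add]
  congr 1
  rw [Fintype.sum_sum_type]
  simp [Finset.sum_ite_eq', Finset.sum_ite_eq]
  congr 1 <;> exact (Finset.sum_eq_single m (fun b _ hb => if_neg hb) (by simp)).trans (if_pos rfl)

lemma pderiv_phi_inl (i : Fin n) (z : MvPolynomial (Fin n ⊕ (Fin n ⊕ Fin n)) ℂ) :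
    pderiv (Sum.inl i : Fin n ⊕ Fin n) (phi z)
      = phi (pderiv (Sum.inl i) z) + phi (pderiv (Sum.inr (Sum.inl i)) z) := by
  rw [phi, pderiv_rename_sum, ← map_add]
  congr 1
  rw [Fintype.sum_sum_type, Fintype.sum_sum_type]
  simp [Finset.sum_ite_eq']

lemma pderiv_phi_inr (j : Fin n) (z : MvPolynomial (Fin n ⊕ (Fin n ⊕ Fin n)) ℂ) :
    pderiv (Sum.inr j : Fin n ⊕ Fin n) (phi z)
      = phi (pderiv (Sum.inr (Sum.inr j)) z) := by
  rw [phi, pderiv_rename_sum]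
  congr 1
  rw [Fintype.sum_sum_type, Fintype.sum_sum_type]
  simp [Finset.sum_ite_eq']

lemma pderiv_psi_inl (i : Fin n) (z : MvPolynomial (Fin n ⊕ (Fin n ⊕ Fin n)) ℂ) :
    pderiv (Sum.inl i : Fin n ⊕ Fin n) (psi z) = psi (pderiv (Sum.inl i) z) := by
  rw [psi, pderiv_rename_sum]
  congr 1
  rw [Fintype.sum_sum_type, Fintype.sum_sum_type]
  simp [Finset.sum_ite_eq']

lemma pderiv_psi_inr (j : Fin n) (z : MvPolynomial (Fin n ⊕ (Fin n ⊕ Fin n)) ℂ) :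
    pderiv (Sum.inr j : Fin n ⊕ Fin n) (psi z)
      = psi (pderiv (Sum.inr (Sum.inl j)) z) + psi (pderiv (Sum.inr (Sum.inr j)) z) := by
  rw [psi, pderiv_rename_sum, ← map_add]
  congr 1
  rw [Fintype.sum_sum_type, Fintype.sum_sum_type]
  simp [Finset.sum_ite_eq']

-- intertwining of the bivector operators
lemma P2_phi (z : MvPolynomial (Fin n ⊕ (Fin n ⊕ Fin n)) ℂ) :
    P2 ω (phi z) = phi ((P13 ω + P23 ω) z) := by
  simp only [P2, P13, P23, LinearMap.add_apply, LinearMap.sum_apply, LinearMap.smul_apply,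
    Module.End.mul_apply, Dop_apply, map_sum, map_smul, map_add, ← Finset.sum_add_distrib]
  refine Finset.sum_congr rfl fun i _ => Finset.sum_congr rfl fun j _ => ?_
  rw [pderiv_phi_inr, pderiv_phi_inl, smul_add]

lemma P2_psi (z : MvPolynomial (Fin n ⊕ (Fin n ⊕ Fin n)) ℂ) :
    P2 ω (psi z) = psi ((P12 ω + P13 ω) z) := by
  simp only [P2, P12, P13, LinearMap.add_apply, LinearMap.sum_apply, LinearMap.smul_apply,
    Module.End.mul_apply, Dop_apply, map_sum, map_smul, map_add, ← Finset.sum_add_distrib]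
  refine Finset.sum_congr rfl fun i _ => Finset.sum_congr rfl fun j _ => ?_
  rw [pderiv_psi_inr, map_add, pderiv_psi_inl, pderiv_psi_inl, smul_add]

lemma P2_pow_phi (k : ℕ) (z : MvPolynomial (Fin n ⊕ (Fin n ⊕ Fin n)) ℂ) :
    ((P2 ω) ^ k) (phi z) = phi (((P13 ω + P23 ω) ^ k) z) := by
  induction k generalizing z with
  | zero => simp
  | succ k ih =>
    rw [pow_succ', pow_succ', Module.End.mul_apply, Module.End.mul_apply, ih, P2_phi]

lemma P2_pow_psi (k : ℕ) (z : MvPolynomial (Fin n ⊕ (Fin n ⊕ Fin n)) ℂ) :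
    ((P2 ω) ^ k) (psi z) = psi (((P12 ω + P13 ω) ^ k) z) := by
  induction k generalizing z with
  | zero => simp
  | succ k ih =>
    rw [pow_succ', pow_succ', Module.End.mul_apply, Module.End.mul_apply, ih, P2_psi]

lemma j12_P2 (y : MvPolynomial (Fin n ⊕ Fin n) ℂ) :
    j12 (P2 ω y) = P12 ω (j12 y) := by
  simp only [P2, P12, LinearMap.sum_apply, LinearMap.smul_apply, Module.End.mul_apply,
    Dop_apply, map_sum, map_smul]
  refine Finset.sum_congr rfl fun i _ => Finset.sum_congr rfl fun j _ => ?_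
  have hinj : Function.Injective (Sum.map (id : Fin n → Fin n) (Sum.inl : Fin n → Fin n ⊕ Fin n)) :=
    Function.Injective.sumMap (fun a b hab => hab) Sum.inl_injective
  have h1 := pderiv_rename (f := Sum.map (id : Fin n → Fin n) (Sum.inl : Fin n → Fin n ⊕ Fin n))
    hinj (Sum.inl i) (pderiv (Sum.inr j) y)
  have h2 := pderiv_rename (f := Sum.map (id : Fin n → Fin n) (Sum.inl : Fin n → Fin n ⊕ Fin n))
    hinj (Sum.inr j) y
  simp only [Sum.map_inl, Sum.map_inr, id_eq] at h1 h2
  rw [j12, ← h1, h2]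

lemma j23_P2 (y : MvPolynomial (Fin n ⊕ Fin n) ℂ) :
    j23 (P2 ω y) = P23 ω (j23 y) := by
  simp only [P2, P23, LinearMap.sum_apply, LinearMap.smul_apply, Module.End.mul_apply,
    Dop_apply, map_sum, map_smul]
  refine Finset.sum_congr rfl fun i _ => Finset.sum_congr rfl fun j _ => ?_
  have h1 := pderiv_rename (f := (Sum.inr : Fin n ⊕ Fin n → Fin n ⊕ (Fin n ⊕ Fin n)))
    Sum.inr_injective (Sum.inl i) (pderiv (Sum.inr j) y)
  have h2 := pderiv_rename (f := (Sum.inr : Fin n ⊕ Fin n → Fin n ⊕ (Fin n ⊕ Fin n)))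
    Sum.inr_injective (Sum.inr j) y
  rw [j23, ← h1, h2]

lemma j12_P2_pow (k : ℕ) (y : MvPolynomial (Fin n ⊕ Fin n) ℂ) :
    j12 (((P2 ω) ^ k) y) = ((P12 ω) ^ k) (j12 y) := by
  induction k generalizing y with
  | zero => simp
  | succ k ih => rw [pow_succ, pow_succ, Module.End.mul_apply, Module.End.mul_apply, ih, j12_P2]

lemma j23_P2_pow (k : ℕ) (y : MvPolynomial (Fin n ⊕ Fin n) ℂ) :
    j23 (((P2 ω) ^ k) y) = ((P23 ω) ^ k) (j23 y) := by
  induction k generalizing y with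
  | zero => simp
  | succ k ih => rw [pow_succ, pow_succ, Module.End.mul_apply, Module.End.mul_apply, ih, j23_P2]

end MoyalOps

noncomputable section MoyalCore

variable {n : ℕ} (ω : Matrix (Fin n) (Fin n) ℂ)

-- P12 / P23 ignore the third / first slot
lemma P12_mul_g3 (u : MvPolynomial (Fin n ⊕ (Fin n ⊕ Fin n)) ℂ) (c : MvPolynomial (Fin n) ℂ) :
    P12 ω (u * g3 c) = P12 ω u * g3 c := by
  have hz1 : ∀ (i : Fin n), pderiv (Sum.inl i : Fin n ⊕ (Fin n ⊕ Fin n)) (g3 c) = 0 :=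
    fun i => pderiv_rename_ne _ (by simp [Function.comp]) c
  have hz2 : ∀ (j : Fin n), pderiv (Sum.inr (Sum.inl j) : Fin n ⊕ (Fin n ⊕ Fin n)) (g3 c) = 0 :=
    fun j => pderiv_rename_ne _ (by simp [Function.comp]) c
  simp only [P12, LinearMap.sum_apply, LinearMap.smul_apply, Module.End.mul_apply, Dop_apply,
    Finset.sum_mul, smul_mul_assoc]
  refine Finset.sum_congr rfl fun i _ => Finset.sum_congr rfl fun j _ => ?_
  rw [pderiv_mul, hz2 j, mul_zero, add_zero, pderiv_mul, hz1 i, mul_zero, add_zero]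

lemma P23_g1_mul (a : MvPolynomial (Fin n) ℂ) (u : MvPolynomial (Fin n ⊕ (Fin n ⊕ Fin n)) ℂ) :
    P23 ω (g1 a * u) = g1 a * P23 ω u := by
  have hz1 : ∀ (i : Fin n), pderiv (Sum.inr (Sum.inl i) : Fin n ⊕ (Fin n ⊕ Fin n)) (g1 a) = 0 :=
    fun i => pderiv_rename_ne _ (by simp) a
  have hz2 : ∀ (j : Fin n), pderiv (Sum.inr (Sum.inr j) : Fin n ⊕ (Fin n ⊕ Fin n)) (g1 a) = 0 :=
    fun j => pderiv_rename_ne _ (by simp) a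
  simp only [P23, LinearMap.sum_apply, LinearMap.smul_apply, Module.End.mul_apply, Dop_apply,
    Finset.mul_sum, mul_smul_comm]
  refine Finset.sum_congr rfl fun i _ => Finset.sum_congr rfl fun j _ => ?_
  rw [pderiv_mul, hz2 j, zero_mul, zero_add, pderiv_mul, hz1 i, zero_mul, zero_add]

lemma P12_pow_mul_g3 (k : ℕ) (u : MvPolynomial (Fin n ⊕ (Fin n ⊕ Fin n)) ℂ)
    (c : MvPolynomial (Fin n) ℂ) :
    ((P12 ω) ^ k) (u * g3 c) = ((P12 ω) ^ k) u * g3 c := by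
  induction k generalizing u with
  | zero => simp
  | succ k ih =>
    rw [pow_succ, Module.End.mul_apply, Module.End.mul_apply, P12_mul_g3, ih]

lemma P23_pow_g1_mul (k : ℕ) (a : MvPolynomial (Fin n) ℂ)
    (u : MvPolynomial (Fin n ⊕ (Fin n ⊕ Fin n)) ℂ) :
    ((P23 ω) ^ k) (g1 a * u) = g1 a * ((P23 ω) ^ k) u := by
  induction k generalizing u with
  | zero => simp
  | succ k ih =>
    rw [pow_succ, Module.End.mul_apply, Module.End.mul_apply, P23_g1_mul, ih]

-- commutation of the three operators
lemma Dop_comm {σ : Type*} (u v : σ) :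
    Commute (Dop (σ := σ) u) (Dop v) :=
  LinearMap.ext fun p => my_pderiv_comm u v p

end MoyalCore

noncomputable section MoyalBEq

variable {n : ℕ} (ω : Matrix (Fin n) (Fin n) ℂ)

lemma sum4_swap {M : Type*} [AddCommMonoid M] {α β γ δ : Type*}
    [Fintype α] [Fintype β] [Fintype γ] [Fintype δ] (F : α → β → γ → δ → M) :
    ∑ a, ∑ b, ∑ c, ∑ d, F a b c d = ∑ c, ∑ a, ∑ d, ∑ b, F a b c d := by
  calc ∑ a, ∑ b, ∑ c, ∑ d, F a b c d
      = ∑ a, ∑ c, ∑ b, ∑ d, F a b c d :=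
        Finset.sum_congr rfl fun a _ => Finset.sum_comm
    _ = ∑ c, ∑ a, ∑ b, ∑ d, F a b c d := Finset.sum_comm
    _ = ∑ c, ∑ a, ∑ d, ∑ b, F a b c d :=
        Finset.sum_congr rfl fun c _ => Finset.sum_congr rfl fun a _ => Finset.sum_comm

lemma iterPDeriv_zero (i : Fin 0 → Fin n) (a : MvPolynomial (Fin n) ℂ) :
    iterPDeriv i a = a := by
  simp [iterPDeriv, List.ofFn_zero]

lemma iterPDeriv_cons {k : ℕ} (i0 : Fin n) (i : Fin k → Fin n) (a : MvPolynomial (Fin n) ℂ) :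
    iterPDeriv (Fin.cons i0 i) a = pderiv i0 (iterPDeriv i a) := by
  unfold iterPDeriv
  rw [List.ofFn_succ]
  simp [Fin.cons_zero, Fin.cons_succ]

lemma P2_apply_pair (u v : MvPolynomial (Fin n) ℂ) :
    P2 ω (em1 u * em2 v) = ∑ i, ∑ j, ω i j • (em1 (pderiv i u) * em2 (pderiv j v)) := by
  simp only [P2, LinearMap.sum_apply, LinearMap.smul_apply, Module.End.mul_apply, Dop_apply]
  refine Finset.sum_congr rfl fun i _ => Finset.sum_congr rfl fun j _ => ?_
  rw [pderiv_mul, pderiv_em2, pderiv_em1_inr, zero_mul, zero_add,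
    pderiv_mul, pderiv_em1, pderiv_em2_inl, mul_zero, add_zero]

lemma P2_pow_apply (k : ℕ) (a b : MvPolynomial (Fin n) ℂ) :
    ((P2 ω) ^ k) (em1 a * em2 b)
      = ∑ i : Fin k → Fin n, ∑ j : Fin k → Fin n,
          (∏ t, ω (i t) (j t)) • (em1 (iterPDeriv i a) * em2 (iterPDeriv j b)) := by
  induction k generalizing a b with
  | zero =>
    rw [pow_zero]
    simp [Fintype.prod_unique, iterPDeriv_zero, Finset.prod_const_one,
      Fintype.sum_unique]
  | succ k ih =>
    rw [pow_succ', Module.End.mul_apply, ih, map_sum]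
    have step : ∀ (i j : Fin k → Fin n),
        P2 ω ((∏ t, ω (i t) (j t)) • (em1 (iterPDeriv i a) * em2 (iterPDeriv j b)))
          = ∑ i0 : Fin n, ∑ j0 : Fin n, (∏ t, ω (i t) (j t)) •
              (ω i0 j0 • (em1 (pderiv i0 (iterPDeriv i a)) * em2 (pderiv j0 (iterPDeriv j b)))) := by
      intro i j
      rw [map_smul, P2_apply_pair, Finset.smul_sum]
      exact Finset.sum_congr rfl fun i0 _ => by rw [Finset.smul_sum]
    have expand : ∀ i : Fin k → Fin n,
        P2 ω (∑ j : Fin k → Fin n,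
            (∏ t, ω (i t) (j t)) • (em1 (iterPDeriv i a) * em2 (iterPDeriv j b)))
          = ∑ j : Fin k → Fin n, ∑ i0 : Fin n, ∑ j0 : Fin n, (∏ t, ω (i t) (j t)) •
              (ω i0 j0 • (em1 (pderiv i0 (iterPDeriv i a)) * em2 (pderiv j0 (iterPDeriv j b)))) := by
      intro i
      rw [map_sum]
      exact Finset.sum_congr rfl fun j _ => step i j
    rw [Finset.sum_congr rfl fun i _ => expand i]
    -- now reindex the RHS over `Fin (k+1) → Fin n`
    have reindex : ∀ (G : (Fin (k+1) → Fin n) → (Fin (k+1) → Fin n) → MvPolynomial (Fin n ⊕ Fin n) ℂ),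
        (∑ i' : Fin (k+1) → Fin n, ∑ j' : Fin (k+1) → Fin n, G i' j')
          = ∑ i0 : Fin n, ∑ i : Fin k → Fin n, ∑ j0 : Fin n, ∑ j : Fin k → Fin n,
              G (Fin.cons i0 i) (Fin.cons j0 j) := by
      intro G
      rw [← Equiv.sum_comp (Fin.consEquiv (fun _ => Fin n))
        (fun i' => ∑ j' : Fin (k+1) → Fin n, G i' j'), Fintype.sum_prod_type]
      refine Finset.sum_congr rfl fun i0 _ => Finset.sum_congr rfl fun i _ => ?_
      rw [← Equiv.sum_comp (Fin.consEquiv (fun _ => Fin n)) (fun j' => G _ j'),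
        Fintype.sum_prod_type]
      rfl
    rw [reindex]
    rw [sum4_swap fun (i : Fin k → Fin n) (j : Fin k → Fin n) (i0 : Fin n) (j0 : Fin n) =>
      (∏ t, ω (i t) (j t)) •
        (ω i0 j0 • (em1 (pderiv i0 (iterPDeriv i a)) * em2 (pderiv j0 (iterPDeriv j b))))]
    refine Finset.sum_congr rfl fun i0 _ => Finset.sum_congr rfl fun i _ =>
      Finset.sum_congr rfl fun j0 _ => Finset.sum_congr rfl fun j _ => ?_
    rw [Fin.prod_univ_succ]
    simp only [Fin.cons_zero, Fin.cons_succ, iterPDeriv_cons, smul_smul]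
    rw [mul_comm]

lemma moyalB_eq (k : ℕ) (a b : MvPolynomial (Fin n) ℂ) :
    moyalB ω k a b = mu2 (((P2 ω) ^ k) (em1 a * em2 b)) := by
  rw [P2_pow_apply, map_sum]
  refine Finset.sum_congr rfl fun i _ => ?_
  rw [map_sum]
  refine Finset.sum_congr rfl fun j _ => ?_
  rw [map_smul, map_mul, mu2_em1, mu2_em2]

end MoyalBEq

noncomputable section MoyalABC

variable {n : ℕ} (ω : Matrix (Fin n) (Fin n) ℂ)

set_option maxHeartbeats 1000000 in
lemma Pgen_commute {σ : Type*} (c1 c2 d1 d2 : Fin n → σ) :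
    Commute (∑ i : Fin n, ∑ j : Fin n, ω i j • (Dop (σ := σ) (c1 i) * Dop (c2 j)))
      (∑ i : Fin n, ∑ j : Fin n, ω i j • (Dop (σ := σ) (d1 i) * Dop (d2 j))) := by
  have base : ∀ u v u' v' : σ,
      Commute (Dop (σ := σ) u * Dop v) (Dop (σ := σ) u' * Dop v') := fun u v u' v' =>
    ((Dop_comm u u').mul_right (Dop_comm u v')).mul_left
      ((Dop_comm v u').mul_right (Dop_comm v v'))
  refine Commute.sum_left _ _ _ fun i _ => Commute.sum_left _ _ _ fun j _ => ?_
  refine Commute.sum_right _ _ _ fun i' _ => Commute.sum_right _ _ _ fun j' _ => ?_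
  exact Commute.smul_left (Commute.smul_right (base _ _ _ _) _) _

lemma commute_P12_P13 : Commute (P12 ω) (P13 ω) := Pgen_commute ω _ _ _ _
lemma commute_P12_P23 : Commute (P12 ω) (P23 ω) := Pgen_commute ω _ _ _ _
lemma commute_P13_P23 : Commute (P13 ω) (P23 ω) := Pgen_commute ω _ _ _ _

/-- Lemma A: left-nested Moyal bidifferential operators through the 3-slot ring. -/
lemma moyalB_left (k k' : ℕ) (a b c : MvPolynomial (Fin n) ℂ) :
    moyalB ω k (moyalB ω k' a b) c
      = mu3 (((P13 ω + P23 ω) ^ k) (((P12 ω) ^ k') (g1 a * g2 b * g3 c))) := by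
  rw [moyalB_eq, moyalB_eq]
  set y := ((P2 ω) ^ k') (em1 a * em2 b) with hy
  have h1 : em1 (mu2 y) * em2 c = phi (j12 y * g3 c) := by
    rw [map_mul, phi_j12, phi_g3]
  have h2 : j12 y * g3 c = ((P12 ω) ^ k') (g1 a * g2 b * g3 c) := by
    rw [hy, j12_P2_pow, map_mul, j12_em1, j12_em2, P12_pow_mul_g3]
  rw [h1, P2_pow_phi, mu2_phi, h2]

/-- Lemma B: right-nested Moyal bidifferential operators through the 3-slot ring. -/
lemma moyalB_right (k k' : ℕ) (a b c : MvPolynomial (Fin n) ℂ) :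
    moyalB ω k a (moyalB ω k' b c)
      = mu3 (((P12 ω + P13 ω) ^ k) (((P23 ω) ^ k') (g1 a * g2 b * g3 c))) := by
  rw [moyalB_eq, moyalB_eq]
  set y := ((P2 ω) ^ k') (em1 b * em2 c) with hy
  have h1 : em1 a * em2 (mu2 y) = psi (g1 a * j23 y) := by
    rw [map_mul, psi_g1, psi_j23]
  have h2 : g1 a * j23 y = ((P23 ω) ^ k') (g1 a * g2 b * g3 c) := by
    rw [hy, j23_P2_pow, map_mul, j23_em1, j23_em2, mul_assoc, P23_pow_g1_mul]
  rw [h1, P2_pow_psi, mu2_psi, h2]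

end MoyalABC

noncomputable section MoyalFinal

open Finset

variable {n : ℕ} (ω : Matrix (Fin n) (Fin n) ℂ)

/-- triple antidiagonal reassociation -/
lemma ad3 {M : Type*} [AddCommMonoid M] (m : ℕ) (F : ℕ → ℕ → ℕ → M) :
    ∑ xy ∈ antidiagonal m, ∑ uv ∈ antidiagonal xy.1, F uv.1 uv.2 xy.2
      = ∑ uw ∈ antidiagonal m, ∑ vy ∈ antidiagonal uw.2, F uw.1 vy.1 vy.2 := by
  rw [Finset.sum_sigma', Finset.sum_sigma']
  refine Finset.sum_nbij' (i := fun x => ⟨(x.snd.1, x.snd.2 + x.fst.2), (x.snd.2, x.fst.2)⟩)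
    (j := fun x => ⟨(x.fst.1 + x.snd.1, x.snd.2), (x.fst.1, x.snd.1)⟩)
    ?_ ?_ ?_ ?_ ?_
  · rintro ⟨⟨x, y⟩, ⟨u, v⟩⟩ ha
    simp only [Finset.mem_sigma, Finset.HasAntidiagonal.mem_antidiagonal] at ha ⊢
    exact ⟨by omega, trivial⟩
  · rintro ⟨⟨x, y⟩, ⟨u, v⟩⟩ ha
    simp only [Finset.mem_sigma, Finset.HasAntidiagonal.mem_antidiagonal] at ha ⊢
    exact ⟨by omega, trivial⟩
  · rintro ⟨⟨x, y⟩, ⟨u, v⟩⟩ ha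
    simp only [Finset.mem_sigma, Finset.HasAntidiagonal.mem_antidiagonal] at ha
    obtain ⟨h1, h2⟩ := ha
    subst h2
    rfl
  · rintro ⟨⟨u, w⟩, ⟨v, y⟩⟩ ha
    simp only [Finset.mem_sigma, Finset.HasAntidiagonal.mem_antidiagonal] at ha
    obtain ⟨h1, h2⟩ := ha
    subst h2
    rfl
  · intro a _
    rfl

lemma ad_swap {M : Type*} [AddCommMonoid M] (m : ℕ) (F : ℕ → ℕ → M) :
    ∑ p ∈ antidiagonal m, F p.1 p.2 = ∑ p ∈ antidiagonal m, F p.2 p.1 := by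
  rw [← Finset.Nat.sum_antidiagonal_swap]
  rfl

/-- binomial identity with inverse factorials, for commuting elements of a ℂ-algebra -/
lemma factorial_smul_sum {R : Type*} [Ring R] [Algebra ℂ R] (X Y : R) (h : Commute X Y) (s : ℕ) :
    ∑ kk ∈ antidiagonal s,
        ((1 / (kk.1.factorial : ℂ)) * (1 / (kk.2.factorial : ℂ))) • (X ^ kk.1 * Y ^ kk.2)
      = (1 / (s.factorial : ℂ)) • (X + Y) ^ s := by
  rw [h.add_pow', Finset.smul_sum]
  refine Finset.sum_congr rfl fun kk hkk => ?_
  have hsum : kk.1 + kk.2 = s := Finset.HasAntidiagonal.mem_antidiagonal.mp hkk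
  have hle : kk.1 ≤ s := by omega
  have hfact : (s.choose kk.1 : ℂ) * (kk.1.factorial : ℂ) * (kk.2.factorial : ℂ)
      = (s.factorial : ℂ) := by
    have hh := Nat.choose_mul_factorial_mul_factorial hle
    rw [show s - kk.1 = kk.2 by omega] at hh
    exact_mod_cast congrArg (Nat.cast : ℕ → ℂ) hh
  rw [← Nat.cast_smul_eq_nsmul ℂ (s.choose kk.1), smul_smul]
  congr 1
  have hk1 : (kk.1.factorial : ℂ) ≠ 0 := Nat.cast_ne_zero.mpr (Nat.factorial_ne_zero _)
  have hk2 : (kk.2.factorial : ℂ) ≠ 0 := Nat.cast_ne_zero.mpr (Nat.factorial_ne_zero _)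
  have hs : (s.factorial : ℂ) ≠ 0 := Nat.cast_ne_zero.mpr (Nat.factorial_ne_zero _)
  field_simp
  linear_combination -hfact

end MoyalFinal

noncomputable section MoyalAssemble

open Finset

variable {n : ℕ} (ω : Matrix (Fin n) (Fin n) ℂ)

lemma moyalB_sum_left {ι : Type*} (k : ℕ) (s : Finset ι) (u : ι → MvPolynomial (Fin n) ℂ)
    (b : MvPolynomial (Fin n) ℂ) :
    moyalB ω k (∑ x ∈ s, u x) b = ∑ x ∈ s, moyalB ω k (u x) b := by
  simp only [moyalB_eq, map_sum, Finset.sum_mul]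

lemma moyalB_smul_left (k : ℕ) (cc : ℂ) (a b : MvPolynomial (Fin n) ℂ) :
    moyalB ω k (cc • a) b = cc • moyalB ω k a b := by
  simp only [moyalB_eq, map_smul, smul_mul_assoc]

lemma moyalB_sum_right {ι : Type*} (k : ℕ) (s : Finset ι) (u : ι → MvPolynomial (Fin n) ℂ)
    (a : MvPolynomial (Fin n) ℂ) :
    moyalB ω k a (∑ x ∈ s, u x) = ∑ x ∈ s, moyalB ω k a (u x) := by
  simp only [moyalB_eq, map_sum, Finset.mul_sum]

lemma moyalB_smul_right (k : ℕ) (cc : ℂ) (a b : MvPolynomial (Fin n) ℂ) :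
    moyalB ω k a (cc • b) = cc • moyalB ω k a b := by
  simp only [moyalB_eq, map_smul, mul_smul_comm]

lemma sum_c_ops (A B : Module.End ℂ (MvPolynomial (Fin n ⊕ (Fin n ⊕ Fin n)) ℂ))
    (hAB : Commute A B) (s : ℕ) (V : MvPolynomial (Fin n ⊕ (Fin n ⊕ Fin n)) ℂ) :
    ∑ kk ∈ antidiagonal s,
        ((1 / (kk.1.factorial : ℂ)) * (-Complex.I / 2) ^ kk.1 *
          ((1 / (kk.2.factorial : ℂ)) * (-Complex.I / 2) ^ kk.2)) •
          mu3 ((A ^ kk.1) ((B ^ kk.2) V))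
      = ((-Complex.I / 2) ^ s * (1 / (s.factorial : ℂ))) • mu3 (((A + B) ^ s) V) := by
  have step1 : ∀ kk ∈ antidiagonal s,
      ((1 / (kk.1.factorial : ℂ)) * (-Complex.I / 2) ^ kk.1 *
          ((1 / (kk.2.factorial : ℂ)) * (-Complex.I / 2) ^ kk.2)) •
          mu3 ((A ^ kk.1) ((B ^ kk.2) V))
        = (-Complex.I / 2) ^ s • (((1 / (kk.1.factorial : ℂ)) * (1 / (kk.2.factorial : ℂ))) •
            mu3 ((A ^ kk.1) ((B ^ kk.2) V))) := by
    intro kk hkk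
    have hsum := Finset.HasAntidiagonal.mem_antidiagonal.mp hkk
    rw [smul_smul]
    congr 1
    rw [← hsum, pow_add]
    ring
  rw [Finset.sum_congr rfl step1, ← Finset.smul_sum]
  have expand : ∀ kk : ℕ × ℕ,
      ((1 / (kk.1.factorial : ℂ)) * (1 / (kk.2.factorial : ℂ))) •
          mu3 ((A ^ kk.1) ((B ^ kk.2) V))
        = mu3 (((((1 / (kk.1.factorial : ℂ)) * (1 / (kk.2.factorial : ℂ))) •
            (A ^ kk.1 * B ^ kk.2))) V) := by
    intro kk
    rw [LinearMap.smul_apply, Module.End.mul_apply, map_smul]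
  have step2 : ∑ kk ∈ antidiagonal s,
      ((1 / (kk.1.factorial : ℂ)) * (1 / (kk.2.factorial : ℂ))) •
          mu3 ((A ^ kk.1) ((B ^ kk.2) V))
        = (1 / (s.factorial : ℂ)) • mu3 (((A + B) ^ s) V) := by
    rw [Finset.sum_congr rfl fun kk _ => expand kk, ← map_sum, ← LinearMap.sum_apply,
      factorial_smul_sum A B hAB s, LinearMap.smul_apply, map_smul]
  rw [step2, smul_smul]

lemma moyalMul_assoc_left (f g h : ℕ → MvPolynomial (Fin n) ℂ) (m : ℕ) :
    moyalMul ω (moyalMul ω f g) h m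
      = ∑ sz ∈ antidiagonal m, ∑ kk ∈ antidiagonal sz.1, ∑ at' ∈ antidiagonal sz.2,
          ∑ bq ∈ antidiagonal at'.2,
            ((1 / (kk.1.factorial : ℂ)) * (-Complex.I / 2) ^ kk.1 *
              ((1 / (kk.2.factorial : ℂ)) * (-Complex.I / 2) ^ kk.2)) •
            mu3 (((P13 ω + P23 ω) ^ kk.1) (((P12 ω) ^ kk.2)
              (g1 (f at'.1) * g2 (g bq.1) * g3 (h bq.2)))) := by
  simp only [moyalMul, moyalB_sum_left, moyalB_smul_left, Finset.smul_sum, smul_smul,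
    moyalB_left]
  calc ∑ kr ∈ antidiagonal m, ∑ pq ∈ antidiagonal kr.2, ∑ kr' ∈ antidiagonal pq.1,
        ∑ ab ∈ antidiagonal kr'.2,
          ((1 / (kr.1.factorial : ℂ)) * (-Complex.I / 2) ^ kr.1 *
            ((1 / (kr'.1.factorial : ℂ)) * (-Complex.I / 2) ^ kr'.1)) •
          mu3 (((P13 ω + P23 ω) ^ kr.1) (((P12 ω) ^ kr'.1)
            (g1 (f ab.1) * g2 (g ab.2) * g3 (h pq.2))))
      = ∑ kr ∈ antidiagonal m, ∑ kz ∈ antidiagonal kr.2, ∑ wq ∈ antidiagonal kz.2,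
          ∑ ab ∈ antidiagonal wq.1,
            ((1 / (kr.1.factorial : ℂ)) * (-Complex.I / 2) ^ kr.1 *
              ((1 / (kz.1.factorial : ℂ)) * (-Complex.I / 2) ^ kz.1)) •
            mu3 (((P13 ω + P23 ω) ^ kr.1) (((P12 ω) ^ kz.1)
              (g1 (f ab.1) * g2 (g ab.2) * g3 (h wq.2)))) := by
        refine Finset.sum_congr rfl fun kr _ => ?_
        exact ad3 kr.2 (fun k' w q => ∑ ab ∈ antidiagonal w,
          ((1 / (kr.1.factorial : ℂ)) * (-Complex.I / 2) ^ kr.1 *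
            ((1 / (k'.factorial : ℂ)) * (-Complex.I / 2) ^ k')) •
          mu3 (((P13 ω + P23 ω) ^ kr.1) (((P12 ω) ^ k')
            (g1 (f ab.1) * g2 (g ab.2) * g3 (h q)))))
    _ = ∑ sz ∈ antidiagonal m, ∑ kk ∈ antidiagonal sz.1, ∑ wq ∈ antidiagonal sz.2,
          ∑ ab ∈ antidiagonal wq.1,
            ((1 / (kk.1.factorial : ℂ)) * (-Complex.I / 2) ^ kk.1 *
              ((1 / (kk.2.factorial : ℂ)) * (-Complex.I / 2) ^ kk.2)) •
            mu3 (((P13 ω + P23 ω) ^ kk.1) (((P12 ω) ^ kk.2)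
              (g1 (f ab.1) * g2 (g ab.2) * g3 (h wq.2)))) :=
        (ad3 m (fun k k' z => ∑ wq ∈ antidiagonal z, ∑ ab ∈ antidiagonal wq.1,
          ((1 / (k.factorial : ℂ)) * (-Complex.I / 2) ^ k *
            ((1 / (k'.factorial : ℂ)) * (-Complex.I / 2) ^ k')) •
          mu3 (((P13 ω + P23 ω) ^ k) (((P12 ω) ^ k')
            (g1 (f ab.1) * g2 (g ab.2) * g3 (h wq.2)))))).symm
    _ = ∑ sz ∈ antidiagonal m, ∑ kk ∈ antidiagonal sz.1, ∑ at' ∈ antidiagonal sz.2,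
          ∑ bq ∈ antidiagonal at'.2,
            ((1 / (kk.1.factorial : ℂ)) * (-Complex.I / 2) ^ kk.1 *
              ((1 / (kk.2.factorial : ℂ)) * (-Complex.I / 2) ^ kk.2)) •
            mu3 (((P13 ω + P23 ω) ^ kk.1) (((P12 ω) ^ kk.2)
              (g1 (f at'.1) * g2 (g bq.1) * g3 (h bq.2)))) := by
        refine Finset.sum_congr rfl fun sz _ => Finset.sum_congr rfl fun kk _ => ?_
        exact ad3 sz.2 (fun a b q =>
          ((1 / (kk.1.factorial : ℂ)) * (-Complex.I / 2) ^ kk.1 *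
            ((1 / (kk.2.factorial : ℂ)) * (-Complex.I / 2) ^ kk.2)) •
          mu3 (((P13 ω + P23 ω) ^ kk.1) (((P12 ω) ^ kk.2)
            (g1 (f a) * g2 (g b) * g3 (h q)))))

end MoyalAssemble

noncomputable section MoyalAssemble2

open Finset

variable {n : ℕ} (ω : Matrix (Fin n) (Fin n) ℂ)

lemma moyalMul_assoc_right (f g h : ℕ → MvPolynomial (Fin n) ℂ) (m : ℕ) :
    moyalMul ω f (moyalMul ω g h) m
      = ∑ sz ∈ antidiagonal m, ∑ kk ∈ antidiagonal sz.1, ∑ at' ∈ antidiagonal sz.2,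
          ∑ bq ∈ antidiagonal at'.2,
            ((1 / (kk.1.factorial : ℂ)) * (-Complex.I / 2) ^ kk.1 *
              ((1 / (kk.2.factorial : ℂ)) * (-Complex.I / 2) ^ kk.2)) •
            mu3 (((P12 ω + P13 ω) ^ kk.1) (((P23 ω) ^ kk.2)
              (g1 (f at'.1) * g2 (g bq.1) * g3 (h bq.2)))) := by
  simp only [moyalMul, moyalB_sum_right, moyalB_smul_right, Finset.smul_sum, smul_smul,
    moyalB_right]
  calc ∑ kr ∈ antidiagonal m, ∑ pq ∈ antidiagonal kr.2, ∑ kr' ∈ antidiagonal pq.2,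
        ∑ bc ∈ antidiagonal kr'.2,
          ((1 / (kr.1.factorial : ℂ)) * (-Complex.I / 2) ^ kr.1 *
            ((1 / (kr'.1.factorial : ℂ)) * (-Complex.I / 2) ^ kr'.1)) •
          mu3 (((P12 ω + P13 ω) ^ kr.1) (((P23 ω) ^ kr'.1)
            (g1 (f pq.1) * g2 (g bc.1) * g3 (h bc.2))))
      = ∑ kr ∈ antidiagonal m, ∑ pq ∈ antidiagonal kr.2, ∑ kr' ∈ antidiagonal pq.1,
        ∑ bc ∈ antidiagonal kr'.2,
          ((1 / (kr.1.factorial : ℂ)) * (-Complex.I / 2) ^ kr.1 *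
            ((1 / (kr'.1.factorial : ℂ)) * (-Complex.I / 2) ^ kr'.1)) •
          mu3 (((P12 ω + P13 ω) ^ kr.1) (((P23 ω) ^ kr'.1)
            (g1 (f pq.2) * g2 (g bc.1) * g3 (h bc.2)))) := by
        refine Finset.sum_congr rfl fun kr _ => ?_
        exact ad_swap kr.2 (fun p q => ∑ kr' ∈ antidiagonal q, ∑ bc ∈ antidiagonal kr'.2,
          ((1 / (kr.1.factorial : ℂ)) * (-Complex.I / 2) ^ kr.1 *
            ((1 / (kr'.1.factorial : ℂ)) * (-Complex.I / 2) ^ kr'.1)) •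
          mu3 (((P12 ω + P13 ω) ^ kr.1) (((P23 ω) ^ kr'.1)
            (g1 (f p) * g2 (g bc.1) * g3 (h bc.2)))))
    _ = ∑ kr ∈ antidiagonal m, ∑ kz ∈ antidiagonal kr.2, ∑ wp ∈ antidiagonal kz.2,
        ∑ bc ∈ antidiagonal wp.1,
          ((1 / (kr.1.factorial : ℂ)) * (-Complex.I / 2) ^ kr.1 *
            ((1 / (kz.1.factorial : ℂ)) * (-Complex.I / 2) ^ kz.1)) •
          mu3 (((P12 ω + P13 ω) ^ kr.1) (((P23 ω) ^ kz.1)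
            (g1 (f wp.2) * g2 (g bc.1) * g3 (h bc.2)))) := by
        refine Finset.sum_congr rfl fun kr _ => ?_
        exact ad3 kr.2 (fun k' w p => ∑ bc ∈ antidiagonal w,
          ((1 / (kr.1.factorial : ℂ)) * (-Complex.I / 2) ^ kr.1 *
            ((1 / (k'.factorial : ℂ)) * (-Complex.I / 2) ^ k')) •
          mu3 (((P12 ω + P13 ω) ^ kr.1) (((P23 ω) ^ k')
            (g1 (f p) * g2 (g bc.1) * g3 (h bc.2)))))
    _ = ∑ sz ∈ antidiagonal m, ∑ kk ∈ antidiagonal sz.1, ∑ wp ∈ antidiagonal sz.2,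
        ∑ bc ∈ antidiagonal wp.1,
          ((1 / (kk.1.factorial : ℂ)) * (-Complex.I / 2) ^ kk.1 *
            ((1 / (kk.2.factorial : ℂ)) * (-Complex.I / 2) ^ kk.2)) •
          mu3 (((P12 ω + P13 ω) ^ kk.1) (((P23 ω) ^ kk.2)
            (g1 (f wp.2) * g2 (g bc.1) * g3 (h bc.2)))) :=
        (ad3 m (fun k k' z => ∑ wp ∈ antidiagonal z, ∑ bc ∈ antidiagonal wp.1,
          ((1 / (k.factorial : ℂ)) * (-Complex.I / 2) ^ k *
            ((1 / (k'.factorial : ℂ)) * (-Complex.I / 2) ^ k')) •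
          mu3 (((P12 ω + P13 ω) ^ k) (((P23 ω) ^ k')
            (g1 (f wp.2) * g2 (g bc.1) * g3 (h bc.2)))))).symm
    _ = ∑ sz ∈ antidiagonal m, ∑ kk ∈ antidiagonal sz.1, ∑ at' ∈ antidiagonal sz.2,
          ∑ bq ∈ antidiagonal at'.2,
            ((1 / (kk.1.factorial : ℂ)) * (-Complex.I / 2) ^ kk.1 *
              ((1 / (kk.2.factorial : ℂ)) * (-Complex.I / 2) ^ kk.2)) •
            mu3 (((P12 ω + P13 ω) ^ kk.1) (((P23 ω) ^ kk.2)
              (g1 (f at'.1) * g2 (g bq.1) * g3 (h bq.2)))) := by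
        refine Finset.sum_congr rfl fun sz _ => Finset.sum_congr rfl fun kk _ => ?_
        exact ad_swap sz.2 (fun w p => ∑ bc ∈ antidiagonal w,
          ((1 / (kk.1.factorial : ℂ)) * (-Complex.I / 2) ^ kk.1 *
            ((1 / (kk.2.factorial : ℂ)) * (-Complex.I / 2) ^ kk.2)) •
          mu3 (((P12 ω + P13 ω) ^ kk.1) (((P23 ω) ^ kk.2)
            (g1 (f p) * g2 (g bc.1) * g3 (h bc.2)))))

end MoyalAssemble2

/-- The Moyal product associated to an antisymmetric matrix `ω` is associative. -/
theorem stmt6 {n : ℕ} (ω : Matrix (Fin n) (Fin n) ℂ) (hω : ω.transpose = -ω)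
    (f g h : ℕ → MvPolynomial (Fin n) ℂ) :
    moyalMul ω (moyalMul ω f g) h = moyalMul ω f (moyalMul ω g h) := by
  funext m
  rw [moyalMul_assoc_left, moyalMul_assoc_right]
  refine Finset.sum_congr rfl fun sz _ => ?_
  set V := ∑ at' ∈ Finset.HasAntidiagonal.antidiagonal sz.2, ∑ bq ∈ Finset.HasAntidiagonal.antidiagonal at'.2,
    (g1 (f at'.1) * g2 (g bq.1) * g3 (h bq.2)) with hV
  have pull : ∀ (A B : Module.End ℂ (MvPolynomial (Fin n ⊕ (Fin n ⊕ Fin n)) ℂ)),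
      (∑ kk ∈ Finset.HasAntidiagonal.antidiagonal sz.1, ∑ at' ∈ Finset.HasAntidiagonal.antidiagonal sz.2,
          ∑ bq ∈ Finset.HasAntidiagonal.antidiagonal at'.2,
            ((1 / (kk.1.factorial : ℂ)) * (-Complex.I / 2) ^ kk.1 *
              ((1 / (kk.2.factorial : ℂ)) * (-Complex.I / 2) ^ kk.2)) •
            mu3 ((A ^ kk.1) ((B ^ kk.2)
              (g1 (f at'.1) * g2 (g bq.1) * g3 (h bq.2)))))
        = ∑ kk ∈ Finset.HasAntidiagonal.antidiagonal sz.1,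
            ((1 / (kk.1.factorial : ℂ)) * (-Complex.I / 2) ^ kk.1 *
              ((1 / (kk.2.factorial : ℂ)) * (-Complex.I / 2) ^ kk.2)) •
            mu3 ((A ^ kk.1) ((B ^ kk.2) V)) := by
    intro A B
    refine Finset.sum_congr rfl fun kk _ => ?_
    rw [hV]
    simp only [map_sum, Finset.smul_sum]
  rw [pull (P13 ω + P23 ω) (P12 ω), pull (P12 ω + P13 ω) (P23 ω)]
  have commL : Commute (P13 ω + P23 ω) (P12 ω) :=
    Commute.add_left (commute_P12_P13 ω).symm (commute_P12_P23 ω).symm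
  have commR : Commute (P12 ω + P13 ω) (P23 ω) :=
    Commute.add_left (commute_P12_P23 ω) (commute_P13_P23 ω)
  rw [sum_c_ops _ _ commL sz.1 V, sum_c_ops _ _ commR sz.1 V]
  rw [show P13 ω + P23 ω + P12 ω = P12 ω + P13 ω + P23 ω from by abel]
end
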